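/- arXiv:math/0302313 — 2 statements merged into one kernel-verified Lean document; each statement's English description precedes it below -/
import Mathlib

section
/- A simplicial complex Δ on [n] is CLeray (i.e., H̃_p(Δ_R) = 0 for all p ≥ c and all R ⊆ [n]) if and only if its Alexander dual Δ* is Cohen-Macaulay (i.e., H̃_p(lk_{Δ*} S) = 0 for all faces S of Δ* whenever p + |S| ≤ d* - 2, where d*-1 = dim Δ*). -/
open Finset

namespace SCx

variable (k : Type) [Field k] {n : ℕ}

/-- An (abstract) simplicial complex on the vertex set `Fin n`:
a set of finsets closed under taking subsets. -/
def IsComplex (Δ : Set (Finset (Fin n))) : Prop :=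
  ∀ F ∈ Δ, ∀ G ⊆ F, G ∈ Δ

/-- Simplicial `p`-chains with coefficients in `k`: functions on the faces of
cardinality `p+1`. -/
abbrev Chains (Δ : Set (Finset (Fin n))) (p : ℤ) : Type :=
  {F : Finset (Fin n) // F ∈ Δ ∧ (F.card : ℤ) = p + 1} → k

open Classical in
/-- The underlying function of the simplicial boundary map, written via its
transpose formula:
`(∂ f) G = ∑_{x : insert x G ∈ Δ} (-1)^{pos of x in insert x G} f (insert x G)`. -/
noncomputable def boundaryFun (Δ : Set (Finset (Fin n))) (p : ℤ)
    (f : Chains k Δ p) : Chains k Δ (p - 1) := fun G => ∑ x : Fin n,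
  if h : x ∉ G.1 ∧ insert x G.1 ∈ Δ then
    (-1 : k) ^ (G.1.filter (fun y => y < x)).card *
      f ⟨insert x G.1, h.2, by
        have hc := G.2.2
        rw [Finset.card_insert_of_notMem h.1]
        push_cast at hc ⊢
        omega⟩
  else 0

/-- The simplicial boundary map. -/
noncomputable def boundary (Δ : Set (Finset (Fin n))) (p : ℤ) :
    Chains k Δ p →ₗ[k] Chains k Δ (p - 1) where
  toFun := boundaryFun k Δ p
  map_add' f g := by
    funext G
    unfold boundaryFun
    rw [Pi.add_apply]
    rw [← Finset.sum_add_distrib]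
    refine Finset.sum_congr rfl fun x _ => ?_
    split_ifs with h
    · rw [Pi.add_apply]; ring
    · rw [add_zero]
  map_smul' c f := by
    funext G
    unfold boundaryFun
    simp only [RingHom.id_apply, Pi.smul_apply, smul_eq_mul, Finset.mul_sum]
    refine Finset.sum_congr rfl fun x _ => ?_
    split_ifs with h
    · ring
    · rw [mul_zero]

/-- Transport of chains along an equality of degrees. -/
noncomputable def chainsCongr (Δ : Set (Finset (Fin n))) {p q : ℤ} (h : p = q) :
    Chains k Δ p ≃ₗ[k] Chains k Δ q := by
  subst h; exact LinearEquiv.refl k _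

noncomputable def cycles (Δ : Set (Finset (Fin n))) (p : ℤ) : Submodule k (Chains k Δ p) :=
  LinearMap.ker (boundary k Δ p)

noncomputable def boundaries (Δ : Set (Finset (Fin n))) (p : ℤ) : Submodule k (Chains k Δ p) :=
  LinearMap.range ((chainsCongr k Δ (show p + 1 - 1 = p by ring)).toLinearMap ∘ₗ
    boundary k Δ (p + 1))

/-- Reduced simplicial homology of `Δ` in degree `p`, with coefficients in the field `k`,
defined as cycles modulo (boundaries intersected with cycles).  With this convention
`H̃_{-1}({∅}) = k`. -/
abbrev ReducedHomology (Δ : Set (Finset (Fin n))) (p : ℤ) :=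
  ↥(cycles k Δ p) ⧸ (Submodule.comap (cycles k Δ p).subtype (boundaries k Δ p))

/-- The Alexander dual of `Δ`. -/
def dual (Δ : Set (Finset (Fin n))) : Set (Finset (Fin n)) := {F | Fᶜ ∉ Δ}

/-- The restriction `Δ_R` of `Δ` to a vertex subset `R`. -/
def restrict (Δ : Set (Finset (Fin n))) (R : Finset (Fin n)) : Set (Finset (Fin n)) :=
  {F | F ∈ Δ ∧ F ⊆ R}

/-- The link `lk_Δ S`. -/
def link (Δ : Set (Finset (Fin n))) (S : Finset (Fin n)) : Set (Finset (Fin n)) :=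
  {F | Disjoint F S ∧ F ∪ S ∈ Δ}

/-- `Δ_R^{S,T} = {F ⊆ R : F ∪ S ∈ Δ}` (for `T` the complement of `R ∪ S`). -/
def sub (Δ : Set (Finset (Fin n))) (R S : Finset (Fin n)) : Set (Finset (Fin n)) :=
  {F | F ⊆ R ∧ F ∪ S ∈ Δ}

/-- `Δ` has dimension `d - 1`, i.e. `d` is the maximal cardinality of a face. -/
def IsDim (Δ : Set (Finset (Fin n))) (d : ℕ) : Prop :=
  (∀ F ∈ Δ, F.card ≤ d) ∧ ∃ F ∈ Δ, F.card = d

/-- `Δ` has frame dimension `c - 1`, i.e. `c` is the largest integer such that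
every `c`-subset of `[n]` is a face of `Δ`. -/
def IsFrame (Δ : Set (Finset (Fin n))) (c : ℕ) : Prop :=
  (∀ F : Finset (Fin n), F.card ≤ c → F ∈ Δ) ∧
    ∃ F : Finset (Fin n), F.card = c + 1 ∧ F ∉ Δ

/-- A facet: a maximal face. -/
def IsFacet (Δ : Set (Finset (Fin n))) (F : Finset (Fin n)) : Prop :=
  F ∈ Δ ∧ ∀ G ∈ Δ, F ⊆ G → F = G


/-! ### Auxiliary infrastructure -/

/-- Ambient space of all "chains": functions on all finsets. -/
abbrev V (k : Type) [Field k] (n : ℕ) : Type := Finset (Fin n) → k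

open Classical in
/-- Degree-free boundary operator on the ambient space (function version). -/
noncomputable def bddFun (Δ' : Set (Finset (Fin n))) (f : V k n) : V k n := fun G =>
  ∑ x : Fin n, if x ∉ G ∧ insert x G ∈ Δ' then
      (-1 : k) ^ (G.filter (fun y => y < x)).card * f (insert x G) else 0

/-- Degree-free boundary operator on the ambient space. -/
noncomputable def bdd (Δ' : Set (Finset (Fin n))) : V k n →ₗ[k] V k n where
  toFun := bddFun k Δ'
  map_add' f g := by
    funext G
    unfold bddFun
    rw [Pi.add_apply, ← Finset.sum_add_distrib]
    refine Finset.sum_congr rfl fun x _ => ?_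
    split_ifs with h
    · rw [Pi.add_apply]; ring
    · rw [add_zero]
  map_smul' c f := by
    funext G
    unfold bddFun
    simp only [RingHom.id_apply, Pi.smul_apply, smul_eq_mul, Finset.mul_sum]
    refine Finset.sum_congr rfl fun x _ => ?_
    split_ifs with h
    · ring
    · rw [mul_zero]

open Classical in
lemma bdd_apply (Δ' : Set (Finset (Fin n))) (f : V k n) (G : Finset (Fin n)) :
    bdd k Δ' f G = ∑ x : Fin n, if x ∉ G ∧ insert x G ∈ Δ' then
      (-1 : k) ^ (G.filter (fun y => y < x)).card * f (insert x G) else 0 := rfl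

/-- `f` is supported on members of `S` of cardinality `m`. -/
def SuppIn {k : Type} [Field k] {n : ℕ} (S : Set (Finset (Fin n))) (m : ℤ) (f : V k n) : Prop :=
  ∀ F, f F ≠ 0 → F ∈ S ∧ (F.card : ℤ) = m

open Classical in
/-- Extension by zero (function version). -/
noncomputable def embFun (Δ' : Set (Finset (Fin n))) (p : ℤ) (f : Chains k Δ' p) :
    V k n := fun F => if h : F ∈ Δ' ∧ (F.card : ℤ) = p + 1 then f ⟨F, h⟩ else 0

/-- Extension by zero, from chains of a complex to the ambient space. -/
noncomputable def emb (Δ' : Set (Finset (Fin n))) (p : ℤ) :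
    Chains k Δ' p →ₗ[k] V k n where
  toFun := embFun k Δ' p
  map_add' f g := by
    funext F
    unfold embFun
    rw [Pi.add_apply]
    split_ifs with h
    · rfl
    · rw [add_zero]
  map_smul' c f := by
    funext F
    unfold embFun
    rw [Pi.smul_apply, smul_eq_mul]
    split_ifs with h
    · rfl
    · rw [mul_zero]

open Classical in
lemma emb_apply (Δ' : Set (Finset (Fin n))) (p : ℤ) (f : Chains k Δ' p)
    (F : Finset (Fin n)) :
    emb k Δ' p f F = if h : F ∈ Δ' ∧ (F.card : ℤ) = p + 1 then f ⟨F, h⟩ else 0 := rfl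

lemma emb_apply_mem (Δ' : Set (Finset (Fin n))) (p : ℤ) (f : Chains k Δ' p)
    (F : {F : Finset (Fin n) // F ∈ Δ' ∧ (F.card : ℤ) = p + 1}) :
    emb k Δ' p f F.1 = f F := by
  rw [emb_apply, dif_pos F.2]

lemma emb_suppIn (Δ' : Set (Finset (Fin n))) (p : ℤ) (f : Chains k Δ' p) :
    SuppIn (k := k) Δ' (p + 1) (emb k Δ' p f) := by
  intro F hF
  rw [emb_apply] at hF
  by_cases h : F ∈ Δ' ∧ (F.card : ℤ) = p + 1
  · exact h
  · rw [dif_neg h] at hF; exact absurd rfl hF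

lemma emb_inj (Δ' : Set (Finset (Fin n))) (p : ℤ) :
    Function.Injective (emb k Δ' p) := by
  intro f g h
  funext F
  have := congrFun h F.1
  rwa [emb_apply_mem, emb_apply_mem] at this

lemma emb_surj (Δ' : Set (Finset (Fin n))) (p : ℤ) (f : V k n)
    (hf : SuppIn (k := k) Δ' (p + 1) f) : ∃ g : Chains k Δ' p, emb k Δ' p g = f := by
  refine ⟨fun F => f F.1, ?_⟩
  funext F
  rw [emb_apply]
  split_ifs with h
  · rfl
  · by_contra hne
    exact h (hf F fun h0 => hne h0.symm)

lemma emb_chainsCongr (Δ' : Set (Finset (Fin n))) {p q : ℤ} (h : p = q)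
    (f : Chains k Δ' p) :
    emb k Δ' q (chainsCongr k Δ' h f) = emb k Δ' p f := by
  subst h; rfl

open Classical in
lemma boundary_apply' (Δ' : Set (Finset (Fin n))) (p : ℤ) (f : Chains k Δ' p)
    (G : {F : Finset (Fin n) // F ∈ Δ' ∧ (F.card : ℤ) = (p - 1) + 1}) :
    boundary k Δ' p f G = ∑ x : Fin n,
      if h : x ∉ G.1 ∧ insert x G.1 ∈ Δ' then
        (-1 : k) ^ (G.1.filter (fun y => y < x)).card *
          f ⟨insert x G.1, h.2, by
            have hc := G.2.2
            rw [Finset.card_insert_of_notMem h.1]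
            push_cast at hc ⊢
            omega⟩
      else 0 := rfl

/-- Key commutation: extension by zero intertwines `boundary` and `bdd`,
for subcomplexes. -/
lemma emb_boundary (Δ' : Set (Finset (Fin n))) (hΔ' : IsComplex Δ') (p : ℤ)
    (f : Chains k Δ' p) :
    emb k Δ' (p - 1) (boundary k Δ' p f) = bdd k Δ' (emb k Δ' p f) := by
  classical
  funext G
  rw [emb_apply, bdd_apply]
  by_cases h : G ∈ Δ' ∧ (G.card : ℤ) = (p - 1) + 1
  · rw [dif_pos h, boundary_apply']
    refine Finset.sum_congr rfl fun x _ => ?_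
    by_cases hx : x ∉ G ∧ insert x G ∈ Δ'
    · rw [dif_pos hx, if_pos hx]
      congr 1
      have hmem : insert x G ∈ Δ' ∧ ((insert x G).card : ℤ) = p + 1 := by
        refine ⟨hx.2, ?_⟩
        rw [Finset.card_insert_of_notMem hx.1]
        push_cast
        omega
      rw [emb_apply, dif_pos hmem]
    · rw [dif_neg hx, if_neg hx]
  · rw [dif_neg h]
    symm
    refine Finset.sum_eq_zero fun x _ => ?_
    by_cases hx : x ∉ G ∧ insert x G ∈ Δ'
    · rw [if_pos hx]
      have : emb k Δ' p f (insert x G) = 0 := by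
        rw [emb_apply]
        refine dif_neg fun hmem => h ⟨hΔ' _ hx.2 G (Finset.subset_insert _ _), ?_⟩
        have := hmem.2
        rw [Finset.card_insert_of_notMem hx.1] at this
        push_cast at this ⊢
        omega
      rw [this, mul_zero]
    · rw [if_neg hx]

/-- Homology-triviality of `Δ'` in degree `p`, phrased at chains level. -/
def HTriv (Δ' : Set (Finset (Fin n))) (p : ℤ) : Prop :=
  ∀ f : Chains k Δ' p, boundary k Δ' p f = 0 →
    ∃ g : Chains k Δ' (p + 1),
      chainsCongr k Δ' (show p + 1 - 1 = p by ring) (boundary k Δ' (p + 1) g) = f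

lemma subsingleton_iff_hTriv (Δ' : Set (Finset (Fin n))) (p : ℤ) :
    Subsingleton (ReducedHomology k Δ' p) ↔ HTriv k Δ' p := by
  rw [ReducedHomology, Submodule.Quotient.subsingleton_iff,
    Submodule.comap_subtype_eq_top]
  constructor
  · intro h f hf
    have : f ∈ cycles k Δ' p := LinearMap.mem_ker.2 hf
    have h2 := h this
    obtain ⟨g, hg⟩ := LinearMap.mem_range.1 h2
    exact ⟨g, hg⟩
  · intro h f hf
    have hf' : boundary k Δ' p f = 0 := LinearMap.mem_ker.1 hf
    obtain ⟨g, hg⟩ := h f hf'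
    exact LinearMap.mem_range.2 ⟨g, hg⟩

/-- Homology-triviality at the ambient level for operator `T` and support level `m`. -/
def VTriv (S : Set (Finset (Fin n))) (T : V k n →ₗ[k] V k n) (m : ℤ) : Prop :=
  ∀ f : V k n, SuppIn S m f → T f = 0 →
    ∃ g : V k n, SuppIn S (m + 1) g ∧ T g = f

/-- Bridge between chains-level and ambient-level triviality. -/
lemma hTriv_iff_vTriv (Δ' : Set (Finset (Fin n))) (T : V k n →ₗ[k] V k n)
    (comm : ∀ (q : ℤ) (f : Chains k Δ' q),
      emb k Δ' (q - 1) (boundary k Δ' q f) = T (emb k Δ' q f)) (p : ℤ) :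
    HTriv k Δ' p ↔ VTriv k Δ' T (p + 1) := by
  constructor
  · intro H f hsupp hTf
    obtain ⟨f', rfl⟩ := emb_surj k Δ' p f hsupp
    have hbd : boundary k Δ' p f' = 0 := by
      apply emb_inj k Δ' (p - 1)
      rw [comm, hTf, map_zero]
    obtain ⟨g, hg⟩ := H f' hbd
    refine ⟨emb k Δ' (p + 1) g, emb_suppIn k Δ' (p + 1) g, ?_⟩
    rw [← comm]
    calc emb k Δ' (p + 1 - 1) (boundary k Δ' (p + 1) g)
        = emb k Δ' p (chainsCongr k Δ' (show p + 1 - 1 = p by ring)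
            (boundary k Δ' (p + 1) g)) := (emb_chainsCongr k Δ' _ _).symm
      _ = emb k Δ' p f' := by rw [hg]
  · intro H f hbd
    have hTf : T (emb k Δ' p f) = 0 := by
      rw [← comm, hbd, map_zero]
    obtain ⟨g, hgsupp, hgT⟩ := H (emb k Δ' p f) (emb_suppIn k Δ' p f) hTf
    obtain ⟨g', rfl⟩ := emb_surj k Δ' (p + 1) g hgsupp
    refine ⟨g', ?_⟩
    apply emb_inj k Δ' p
    rw [emb_chainsCongr, comm, hgT]


/-! ### Sign bookkeeping -/

/-- Number of elements of `A` less than `x`. -/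
def cnt (A : Finset (Fin n)) (x : Fin n) : ℕ := (A.filter (fun y => y < x)).card

lemma cnt_insert {A : Finset (Fin n)} {y : Fin n} (hy : y ∉ A) (x : Fin n) :
    cnt (insert y A) x = cnt A x + (if y < x then 1 else 0) := by
  classical
  unfold cnt
  rw [Finset.filter_insert]
  split_ifs with h
  · rw [Finset.card_insert_of_notMem (fun hmem => hy (Finset.mem_of_mem_filter _ hmem))]
  · rw [add_zero]

lemma cnt_erase {A : Finset (Fin n)} {y : Fin n} (hy : y ∈ A) (x : Fin n) :
    cnt A x = cnt (A.erase y) x + (if y < x then 1 else 0) := by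
  classical
  have h : A = insert y (A.erase y) := (Finset.insert_erase hy).symm
  conv_lhs => rw [h]
  rw [cnt_insert (Finset.notMem_erase y A) x]

lemma cnt_self_not {A : Finset (Fin n)} {x : Fin n} (h : x ∉ A) :
    cnt (insert x A) x = cnt A x := by
  rw [cnt_insert h x, if_neg (lt_irrefl x), add_zero]

lemma sign_mul_self (a : ℕ) : (-1 : k) ^ a * (-1 : k) ^ a = 1 := by
  rw [← pow_add, ← two_mul, pow_mul, neg_one_sq, one_pow]

open Classical in
lemma bdd_apply' (Δ' : Set (Finset (Fin n))) (f : V k n) (G : Finset (Fin n)) :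
    bdd k Δ' f G = ∑ x : Fin n, if x ∉ G ∧ insert x G ∈ Δ' then
      (-1 : k) ^ cnt G x * f (insert x G) else 0 := rfl

/-! ### `∂ ∘ ∂ = 0` -/

lemma bdd_bdd (Δ' : Set (Finset (Fin n)))
    (hH : ∀ G x y, x ≠ y → x ∉ G → y ∉ G → insert y G ∈ Δ' →
      insert x (insert y G) ∈ Δ' → insert x G ∈ Δ')
    (f : V k n) : bdd k Δ' (bdd k Δ' f) = 0 := by
  classical
  funext G
  rw [bdd_apply', Pi.zero_apply]
  have hrw : ∀ y : Fin n,
      (if y ∉ G ∧ insert y G ∈ Δ' then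
        (-1 : k) ^ cnt G y * bdd k Δ' f (insert y G) else 0)
      = ∑ x : Fin n, (if y ∉ G ∧ insert y G ∈ Δ' then
          (if x ∉ insert y G ∧ insert x (insert y G) ∈ Δ' then
            (-1 : k) ^ cnt G y * ((-1 : k) ^ cnt (insert y G) x *
              f (insert x (insert y G))) else 0) else 0) := by
    intro y
    split_ifs with h
    · rw [bdd_apply', Finset.mul_sum]
      refine Finset.sum_congr rfl fun x _ => ?_
      split_ifs with h2
      · rfl
      · rw [mul_zero]
    · rw [Finset.sum_const_zero]
  rw [Finset.sum_congr rfl fun y _ => hrw y, ← Finset.sum_product']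
  set t : Fin n × Fin n → k := fun yx =>
    (if yx.1 ∉ G ∧ insert yx.1 G ∈ Δ' then
      (if yx.2 ∉ insert yx.1 G ∧ insert yx.2 (insert yx.1 G) ∈ Δ' then
        (-1 : k) ^ cnt G yx.1 * ((-1 : k) ^ cnt (insert yx.1 G) yx.2 *
          f (insert yx.2 (insert yx.1 G))) else 0) else 0) with ht
  have key : ∀ yx : Fin n × Fin n, t yx + t yx.swap = 0 := by
    rintro ⟨y, x⟩
    by_cases hC : y ∉ G ∧ insert y G ∈ Δ' ∧ x ∉ insert y G ∧ insert x (insert y G) ∈ Δ'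
    · obtain ⟨hyG, hyΔ, hxyG, hxyΔ⟩ := hC
      have hxy : x ≠ y := fun h => hxyG (h ▸ Finset.mem_insert_self y G)
      have hxG : x ∉ G := fun h => hxyG (Finset.mem_insert_of_mem h)
      have hyxG : y ∉ insert x G := by
        simp only [Finset.mem_insert]
        push_neg
        exact ⟨fun h => hxy h.symm, hyG⟩
      have hxΔ : insert x G ∈ Δ' := hH G x y hxy hxG hyG hyΔ hxyΔ
      have hyxΔ : insert y (insert x G) ∈ Δ' := by
        rw [Finset.insert_comm]; exact hxyΔ
      have harg : insert y (insert x G) = insert x (insert y G) := Finset.insert_comm _ _ _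
      simp only [t, Prod.swap_prod_mk]
      rw [if_pos ⟨hyG, hyΔ⟩, if_pos ⟨hxyG, hxyΔ⟩, if_pos ⟨hxG, hxΔ⟩, if_pos ⟨hyxG, hyxΔ⟩]
      rw [harg, cnt_insert hyG, cnt_insert hxG]
      rcases lt_or_gt_of_ne hxy with hlt | hgt
      · rw [if_neg (asymm hlt), if_pos hlt, add_zero, pow_add, pow_one]
        ring
      · rw [if_pos hgt, if_neg (asymm hgt), add_zero, pow_add, pow_one]
        ring
    · have hC' : ¬(x ∉ G ∧ insert x G ∈ Δ' ∧ y ∉ insert x G ∧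
          insert y (insert x G) ∈ Δ') := by
        intro ⟨hxG, hxΔ, hyxG, hyxΔ⟩
        have hxy : y ≠ x := fun h => hyxG (h ▸ Finset.mem_insert_self x G)
        have hyG : y ∉ G := fun h => hyxG (Finset.mem_insert_of_mem h)
        refine hC ⟨hyG, hH G y x hxy hyG hxG hxΔ hyxΔ, ?_, ?_⟩
        · simp only [Finset.mem_insert]
          push_neg
          exact ⟨fun h => hxy h.symm, hxG⟩
        · rw [Finset.insert_comm]; exact hyxΔ
      have h1 : t (y, x) = 0 := by
        simp only [t]
        split_ifs with h1 h2
        · exact absurd ⟨h1.1, h1.2, h2.1, h2.2⟩ hC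
        · rfl
        · rfl
      have h2 : t (x, y) = 0 := by
        simp only [t]
        split_ifs with h1 h2
        · exact absurd ⟨h1.1, h1.2, h2.1, h2.2⟩ hC'
        · rfl
        · rfl
      rw [Prod.swap_prod_mk, h1, h2, add_zero]
  refine Finset.sum_ninvolution Prod.swap (fun a => key a) ?_
    (fun a => Finset.mem_univ _) (fun a => Prod.swap_swap a)
  rintro ⟨y, x⟩ ha h
  apply ha
  have hxy : x = y := congrArg Prod.fst h
  subst hxy
  have h2 : ¬(x ∉ insert x G ∧ insert x (insert x G) ∈ Δ') :=
    fun hc => hc.1 (Finset.mem_insert_self x G)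
  simp only [t]
  rw [if_neg h2, ite_self]

lemma complex_hH (Δ' : Set (Finset (Fin n))) (hΔ' : IsComplex Δ') :
    ∀ G x y, x ≠ y → (x : Fin n) ∉ G → y ∉ G → insert y G ∈ Δ' →
      insert x (insert y G) ∈ Δ' → insert x G ∈ Δ' := by
  intro G x y _ _ _ _ hxy
  exact hΔ' _ hxy _ (by
    intro a ha
    rcases Finset.mem_insert.1 ha with h | h
    · subst h; exact Finset.mem_insert_self _ _
    · exact Finset.mem_insert_of_mem (Finset.mem_insert_of_mem h))

/-! ### Support and monotonicity -/

lemma bdd_congr_subset {Δ₁ Δ₂ : Set (Finset (Fin n))} (h12 : Δ₁ ⊆ Δ₂)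
    (f : V k n) (hf : ∀ F, f F ≠ 0 → F ∈ Δ₁) : bdd k Δ₂ f = bdd k Δ₁ f := by
  classical
  funext G
  rw [bdd_apply, bdd_apply]
  refine Finset.sum_congr rfl fun x _ => ?_
  by_cases h1 : x ∉ G ∧ insert x G ∈ Δ₁
  · rw [if_pos h1, if_pos ⟨h1.1, h12 h1.2⟩]
  · rw [if_neg h1]
    by_cases h2 : x ∉ G ∧ insert x G ∈ Δ₂
    · rw [if_pos h2]
      have : f (insert x G) = 0 := by
        by_contra hne
        exact h1 ⟨h2.1, hf _ hne⟩
      rw [this, mul_zero]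
    · rw [if_neg h2]

lemma bdd_suppIn (Δ' : Set (Finset (Fin n))) (hΔ' : IsComplex Δ') (m : ℤ)
    (f : V k n) (hf : ∀ F, f F ≠ 0 → (F.card : ℤ) = m) :
    SuppIn Δ' (m - 1) (bdd k Δ' f) := by
  intro G hG
  rw [bdd_apply] at hG
  obtain ⟨x, -, hx⟩ := Finset.exists_ne_zero_of_sum_ne_zero hG
  have hguard : x ∉ G ∧ insert x G ∈ Δ' := by
    by_contra h
    rw [if_neg h] at hx
    exact hx rfl
  rw [if_pos hguard] at hx
  have hfne : f (insert x G) ≠ 0 := by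
    intro h
    rw [h, mul_zero] at hx
    exact hx rfl
  have hcard := hf _ hfne
  rw [Finset.card_insert_of_notMem hguard.1] at hcard
  push_cast at hcard
  refine ⟨hΔ' _ hguard.2 _ (Finset.subset_insert _ _), by omega⟩

open Classical in
/-- Projection onto functions supported in `S` (function version). -/
noncomputable def projFun (S : Set (Finset (Fin n))) (f : V k n) : V k n :=
  fun F => if F ∈ S then f F else 0

/-- Projection onto functions supported in `S`. -/
noncomputable def proj (S : Set (Finset (Fin n))) : V k n →ₗ[k] V k n where
  toFun := projFun k S
  map_add' f g := by
    funext F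
    simp only [projFun, Pi.add_apply]
    split_ifs with h
    · rfl
    · rw [add_zero]
  map_smul' c f := by
    funext F
    simp only [projFun, Pi.smul_apply, smul_eq_mul, RingHom.id_apply]
    split_ifs with h
    · rfl
    · rw [mul_zero]

open Classical in
lemma proj_apply (S : Set (Finset (Fin n))) (f : V k n) (F : Finset (Fin n)) :
    proj k S f F = if F ∈ S then f F else 0 := rfl


/-! ### The simplex, non-faces, and the cone homotopy -/

/-- The full simplex on vertex set `R`. -/
def splx (R : Finset (Fin n)) : Set (Finset (Fin n)) := {F | F ⊆ R}

/-- Non-faces of `Δ` inside `R`. -/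
def NFs (Δ : Set (Finset (Fin n))) (R : Finset (Fin n)) : Set (Finset (Fin n)) :=
  {F | F ⊆ R ∧ F ∉ Δ}

lemma splx_isComplex (R : Finset (Fin n)) : IsComplex (splx (n := n) R) :=
  fun _ hF _ hG => Set.mem_setOf.2 (hG.trans hF)

lemma restrict_isComplex {Δ : Set (Finset (Fin n))} (hΔ : IsComplex Δ)
    (R : Finset (Fin n)) : IsComplex (restrict Δ R) := by
  intro F hF G hG
  exact ⟨hΔ F hF.1 G hG, hG.trans hF.2⟩

lemma link_isComplex {Δ : Set (Finset (Fin n))} (hΔ : IsComplex Δ)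
    (S : Finset (Fin n)) : IsComplex (link Δ S) := by
  intro F hF G hG
  refine ⟨Finset.disjoint_of_subset_left hG hF.1, hΔ _ hF.2 _ ?_⟩
  exact Finset.union_subset_union hG (subset_refl S)

lemma dual_isComplex {Δ : Set (Finset (Fin n))} (hΔ : IsComplex Δ) :
    IsComplex (dual Δ) := by
  intro F hF G hG
  intro hGc
  exact hF (hΔ _ hGc _ (Finset.compl_subset_compl.2 hG))

lemma mem_splx {R F : Finset (Fin n)} : F ∈ splx (n := n) R ↔ F ⊆ R := Iff.rfl

/-- `πDπ = πD`. -/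
lemma proj_bdd_proj {Δ : Set (Finset (Fin n))} (hΔ : IsComplex Δ)
    (R : Finset (Fin n)) (f : V k n) :
    proj k (NFs Δ R) (bdd k (splx R) (proj k (NFs Δ R) f)) =
      proj k (NFs Δ R) (bdd k (splx R) f) := by
  classical
  funext G
  rw [proj_apply, proj_apply]
  split_ifs with hG
  · rw [bdd_apply', bdd_apply']
    refine Finset.sum_congr rfl fun x _ => ?_
    by_cases hx : x ∉ G ∧ insert x G ∈ splx R
    · rw [if_pos hx, if_pos hx]
      have hmem : insert x G ∈ NFs Δ R := by
        refine ⟨hx.2, fun hins => hG.2 (hΔ _ hins _ (Finset.subset_insert _ _))⟩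
      rw [proj_apply, if_pos hmem]
    · rw [if_neg hx, if_neg hx]
  · rfl

/-- Commutation for the non-face complex. -/
lemma emb_boundary_nf {Δ : Set (Finset (Fin n))} (R : Finset (Fin n)) (p : ℤ)
    (f : Chains k (NFs Δ R) p) :
    emb k (NFs Δ R) (p - 1) (boundary k (NFs Δ R) p f) =
      proj k (NFs Δ R) (bdd k (splx R) (emb k (NFs Δ R) p f)) := by
  classical
  funext G
  rw [emb_apply, proj_apply]
  by_cases hG : G ∈ NFs Δ R
  swap
  · rw [dif_neg (fun h => hG h.1), if_neg hG]
  rw [if_pos hG]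
  by_cases hc : (G.card : ℤ) = (p - 1) + 1
  · rw [dif_pos ⟨hG, hc⟩, boundary_apply', bdd_apply']
    refine Finset.sum_congr rfl fun x _ => ?_
    by_cases hx : x ∉ G ∧ insert x G ∈ NFs Δ R
    · have hx' : x ∉ G ∧ insert x G ∈ splx R := ⟨hx.1, hx.2.1⟩
      rw [dif_pos hx, if_pos hx']
      congr 1
      have hmem : insert x G ∈ NFs Δ R ∧ ((insert x G).card : ℤ) = p + 1 := by
        refine ⟨hx.2, ?_⟩
        rw [Finset.card_insert_of_notMem hx.1]
        push_cast
        omega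
      rw [emb_apply, dif_pos hmem]
    · rw [dif_neg hx]
      by_cases hx' : x ∉ G ∧ insert x G ∈ splx R
      · rw [if_pos hx']
        have : emb k (NFs Δ R) p f (insert x G) = 0 := by
          rw [emb_apply]
          refine dif_neg fun hmem => hx ⟨hx'.1, hmem.1⟩
        rw [this, mul_zero]
      · rw [if_neg hx']
  · rw [dif_neg (fun h => hc h.2)]
    symm
    rw [bdd_apply']
    refine Finset.sum_eq_zero fun x _ => ?_
    by_cases hx' : x ∉ G ∧ insert x G ∈ splx R
    · rw [if_pos hx']
      have : emb k (NFs Δ R) p f (insert x G) = 0 := by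
        rw [emb_apply]
        refine dif_neg fun hmem => hc ?_
        have := hmem.2
        rw [Finset.card_insert_of_notMem hx'.1] at this
        push_cast at this ⊢
        omega
      rw [this, mul_zero]
    · rw [if_neg hx']

open Classical in
/-- The cone contraction of the simplex on `R` with apex `v`. -/
noncomputable def coneFun (R : Finset (Fin n)) (v : Fin n) (f : V k n) : V k n :=
  fun F => if v ∈ F ∧ F ⊆ R then (-1 : k) ^ cnt F v * f (F.erase v) else 0

open Classical in
lemma coneFun_apply (R : Finset (Fin n)) (v : Fin n) (f : V k n) (F : Finset (Fin n)) :
    coneFun k R v f F = if v ∈ F ∧ F ⊆ R then (-1 : k) ^ cnt F v * f (F.erase v) else 0 :=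
  rfl

/-- The chain-homotopy identity for the cone. -/
lemma cone_identity {R : Finset (Fin n)} {v : Fin n} (hv : v ∈ R) (f : V k n)
    (G : Finset (Fin n)) (hG : G ⊆ R) :
    bdd k (splx R) (coneFun k R v f) G + coneFun k R v (bdd k (splx R) f) G = f G := by
  classical
  by_cases hvG : v ∈ G
  · -- second summand expands; first summand pairs with it
    rw [bdd_apply', coneFun_apply, if_pos ⟨hvG, hG⟩, bdd_apply', Finset.mul_sum,
      ← Finset.sum_add_distrib]
    rw [Finset.sum_eq_single v]
    · -- the `x = v` term
      have h1 : ¬(v ∉ G ∧ insert v G ∈ splx R) := fun h => h.1 hvG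
      rw [if_neg h1, zero_add]
      have h2 : v ∉ G.erase v ∧ insert v (G.erase v) ∈ splx R := by
        refine ⟨Finset.notMem_erase _ _, ?_⟩
        rw [Finset.insert_erase hvG]
        exact hG
      rw [if_pos h2, Finset.insert_erase hvG]
      have hcv : cnt (G.erase v) v = cnt G v := by
        have := cnt_erase hvG v
        rw [if_neg (lt_irrefl v), add_zero] at this
        omega
      rw [hcv, ← mul_assoc, sign_mul_self, one_mul]
    · -- terms with `x ≠ v` cancel in pairs
      intro x _ hxv
      by_cases hx : x ∉ G ∧ insert x G ∈ splx R
      · have hx2 : x ∉ G.erase v ∧ insert x (G.erase v) ∈ splx R := by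
          refine ⟨fun h => hx.1 (Finset.mem_of_mem_erase h), ?_⟩
          rw [mem_splx] at hx ⊢
          exact (Finset.insert_subset_insert _ (Finset.erase_subset _ _)).trans hx.2
        rw [if_pos hx, if_pos hx2]
        have hcone : v ∈ insert x G ∧ insert x G ⊆ R := ⟨Finset.mem_insert_of_mem hvG, hx.2⟩
        rw [coneFun_apply, if_pos hcone]
        rw [Finset.erase_insert_of_ne hxv]
        have e1 : cnt (insert x G) v = cnt G v + (if x < v then 1 else 0) :=
          cnt_insert hx.1 v
        have e2 : cnt G x = cnt (G.erase v) x + (if v < x then 1 else 0) :=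
          cnt_erase hvG x
        rw [e1, e2]
        rcases lt_or_gt_of_ne hxv with hlt | hgt
        · rw [if_pos hlt, if_neg (asymm hlt), add_zero, pow_add, pow_one]
          ring
        · rw [if_neg (asymm hgt), if_pos hgt, add_zero, pow_add, pow_one]
          ring
      · have hx2 : ¬(x ∉ G.erase v ∧ insert x (G.erase v) ∈ splx R) := by
          intro h
          refine hx ⟨fun hmem => h.1 (Finset.mem_erase.2 ⟨hxv, hmem⟩), ?_⟩
          rw [mem_splx] at h ⊢
          rw [Finset.insert_subset_iff] at h ⊢
          exact ⟨h.2.1, hG⟩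
        rw [if_neg hx, if_neg hx2, zero_add, mul_zero]
    · intro h
      exact absurd (Finset.mem_univ v) h
  · -- `v ∉ G`: only the `x = v` term of the first summand survives
    have h2 : coneFun k R v (bdd k (splx R) f) G = 0 := by
      rw [coneFun_apply, if_neg (fun h => hvG h.1)]
    rw [h2, add_zero, bdd_apply', Finset.sum_eq_single v]
    · have hguard : v ∉ G ∧ insert v G ∈ splx R := by
        refine ⟨hvG, ?_⟩
        rw [mem_splx, Finset.insert_subset_iff]
        exact ⟨hv, hG⟩
      rw [if_pos hguard, coneFun_apply,
        if_pos ⟨Finset.mem_insert_self v G, (mem_splx).1 hguard.2⟩]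
      rw [Finset.erase_insert hvG, cnt_self_not hvG, ← mul_assoc, sign_mul_self, one_mul]
    · intro x _ hxv
      by_cases hx : x ∉ G ∧ insert x G ∈ splx R
      · rw [if_pos hx, coneFun_apply]
        have : ¬(v ∈ insert x G ∧ insert x G ⊆ R) := by
          rintro ⟨hmem, -⟩
          rcases Finset.mem_insert.1 hmem with h | h
          · exact hxv h.symm
          · exact hvG h
        rw [if_neg this, mul_zero]
      · rw [if_neg hx]
    · intro h
      exact absurd (Finset.mem_univ v) h

/-- The simplex on `R` is acyclic (in every degree). -/
lemma splx_exact {R : Finset (Fin n)} {v : Fin n} (hv : v ∈ R) (m : ℤ) :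
    VTriv k (splx R) (bdd k (splx R)) m := by
  classical
  intro f hsupp hDf
  refine ⟨coneFun k R v f, ?_, ?_⟩
  · intro F hF
    rw [coneFun_apply] at hF
    by_cases h : v ∈ F ∧ F ⊆ R
    · rw [if_pos h] at hF
      have hfe : f (F.erase v) ≠ 0 := by
        intro h0
        rw [h0, mul_zero] at hF
        exact hF rfl
      have := (hsupp _ hfe).2
      have hc : (F.erase v).card + 1 = F.card := Finset.card_erase_add_one h.1
      refine ⟨h.2, ?_⟩
      push_cast [← hc]
      omega
    · rw [if_neg h] at hF
      exact absurd rfl hF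
  · funext G
    by_cases hG : G ⊆ R
    · have := cone_identity k hv f G hG
      rw [hDf] at this
      have hzero : coneFun k R v (0 : V k n) G = 0 := by
        rw [coneFun_apply]
        split_ifs with h
        · rw [Pi.zero_apply, mul_zero]
        · rfl
      rw [hzero, add_zero] at this
      exact this
    · rw [bdd_apply', Finset.sum_eq_zero, eq_comm]
      · by_contra hne
        exact hG ((hsupp G hne).1)
      · intro x _
        refine if_neg fun h => hG ?_
        exact (Finset.subset_insert x G).trans ((mem_splx).1 h.2)

/-! ### The two diagram chases -/

lemma suppIn_proj_eq_self {S : Set (Finset (Fin n))} {m : ℤ} {f : V k n}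
    (h : SuppIn (k := k) S m f) : proj k S f = f := by
  classical
  funext G
  rw [proj_apply]
  split_ifs with hG
  · rfl
  · by_contra hne
    exact hG (h G (fun h0 => hne h0.symm)).1

lemma suppIn_proj_eq_zero {S S' : Set (Finset (Fin n))} {m : ℤ} {f : V k n}
    (h : SuppIn (k := k) S' m f) (hdisj : ∀ F, F ∈ S' → F ∉ S) : proj k S f = 0 := by
  classical
  funext G
  rw [proj_apply, Pi.zero_apply]
  split_ifs with hG
  · by_contra hne
    exact hdisj G (h G hne).1 hG
  · rfl

lemma chase_forward {Δ : Set (Finset (Fin n))} (hΔ : IsComplex Δ)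
    {R : Finset (Fin n)} {v : Fin n} (hv : v ∈ R) (m : ℤ)
    (hΓ : VTriv k (restrict Δ R) (bdd k (splx R)) m) :
    VTriv k (NFs Δ R) ((proj k (NFs Δ R)) ∘ₗ bdd k (splx R)) (m + 1) := by
  intro z hz hπDz
  rw [LinearMap.comp_apply] at hπDz
  set y := bdd k (splx R) z with hy
  have hysupp : SuppIn (k := k) (restrict Δ R) m y := by
    have h1 : SuppIn (k := k) (splx R) (m + 1 - 1) y :=
      bdd_suppIn k (splx R) (splx_isComplex R) (m + 1) z (fun F hF => (hz F hF).2)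
    intro G hG
    have h2 := h1 G hG
    have hGnf : G ∉ NFs Δ R := by
      intro hmem
      have := congrFun hπDz G
      rw [proj_apply, if_pos hmem, Pi.zero_apply] at this
      exact hG this
    have hGΔ : G ∈ Δ := by
      by_contra hne
      exact hGnf ⟨h2.1, hne⟩
    refine ⟨⟨hGΔ, h2.1⟩, by omega⟩
  have hDy : bdd k (splx R) y = 0 := by
    rw [hy]
    have := bdd_bdd k (splx R) (complex_hH (splx R) (splx_isComplex R)) z
    exact this
  obtain ⟨g, hgsupp, hgD⟩ := hΓ y hysupp hDy
  have hwsupp : SuppIn (k := k) (splx R) (m + 1) (z - g) := by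
    intro F hF
    rw [Pi.sub_apply] at hF
    by_cases hzF : z F = 0
    · rw [hzF, zero_sub, neg_ne_zero] at hF
      exact ⟨(hgsupp F hF).1.2, (hgsupp F hF).2⟩
    · exact ⟨(hz F hzF).1.1, (hz F hzF).2⟩
  have hwD : bdd k (splx R) (z - g) = 0 := by
    rw [map_sub, ← hy, hgD, sub_self]
  obtain ⟨w, hwsupp', hwD'⟩ := splx_exact k hv (m + 1) (z - g) hwsupp hwD
  refine ⟨proj k (NFs Δ R) w, ?_, ?_⟩
  · intro F hF
    rw [proj_apply] at hF
    split_ifs at hF with h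
    · exact ⟨h, (hwsupp' F hF).2⟩
    · exact absurd rfl hF
  · rw [LinearMap.comp_apply, proj_bdd_proj k hΔ, hwD', map_sub]
    rw [suppIn_proj_eq_self k hz, suppIn_proj_eq_zero k hgsupp
      (fun F hF hnf => hnf.2 hF.1), sub_zero]

lemma chase_backward {Δ : Set (Finset (Fin n))} (hΔ : IsComplex Δ)
    {R : Finset (Fin n)} {v : Fin n} (hv : v ∈ R) (m : ℤ)
    (hNF : VTriv k (NFs Δ R) ((proj k (NFs Δ R)) ∘ₗ bdd k (splx R)) (m + 1)) :
    VTriv k (restrict Δ R) (bdd k (splx R)) m := by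
  intro f hf hDf
  obtain ⟨w, hwsupp, hwD⟩ := splx_exact k hv m f
    (fun F hF => ⟨(hf F hF).1.2, (hf F hF).2⟩) hDf
  set z := proj k (NFs Δ R) w with hzdef
  have hzsupp : SuppIn (k := k) (NFs Δ R) (m + 1) z := by
    intro F hF
    rw [hzdef, proj_apply] at hF
    split_ifs at hF with h
    · exact ⟨h, (hwsupp F hF).2⟩
    · exact absurd rfl hF
  have hzD : ((proj k (NFs Δ R)) ∘ₗ bdd k (splx R)) z = 0 := by
    rw [LinearMap.comp_apply, hzdef, proj_bdd_proj k hΔ, hwD]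
    exact suppIn_proj_eq_zero k hf (fun F hF hnf => hnf.2 hF.1)
  obtain ⟨u, husupp, huD⟩ := hNF z hzsupp hzD
  rw [LinearMap.comp_apply] at huD
  refine ⟨w - bdd k (splx R) u, ?_, ?_⟩
  · have hDusupp : SuppIn (k := k) (splx R) (m + 1) (bdd k (splx R) u) := by
      have := bdd_suppIn k (splx R) (splx_isComplex R) (m + 1 + 1) u
        (fun F hF => (husupp F hF).2)
      intro F hF
      have h2 := this F hF
      exact ⟨h2.1, by omega⟩
    intro F hF
    rw [Pi.sub_apply] at hF
    have hsplx : F ∈ splx R ∧ (F.card : ℤ) = m + 1 := by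
      by_cases hwF : w F = 0
      · rw [hwF, zero_sub, neg_ne_zero] at hF
        exact hDusupp F hF
      · exact hwsupp F hwF
    have hFnf : F ∉ NFs Δ R := by
      intro hmem
      have hπ : proj k (NFs Δ R) (w - bdd k (splx R) u) = 0 := by
        rw [map_sub, ← hzdef]
        have hπDu : proj k (NFs Δ R) (bdd k (splx R) u) = z := huD
        rw [hπDu, sub_self]
      have := congrFun hπ F
      rw [proj_apply, if_pos hmem, Pi.zero_apply] at this
      exact hF this
    have hFΔ : F ∈ Δ := by
      by_contra hne
      exact hFnf ⟨hsplx.1, hne⟩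
    exact ⟨⟨hFΔ, hsplx.1⟩, hsplx.2⟩
  · rw [map_sub, hwD]
    have : bdd k (splx R) (bdd k (splx R) u) = 0 :=
      bdd_bdd k (splx R) (complex_hH (splx R) (splx_isComplex R)) u
    rw [this, sub_zero]


/-! ### Rank characterization of homology triviality -/

noncomputable instance chainIdxFintype (Δ' : Set (Finset (Fin n))) (p : ℤ) :
    Fintype {F : Finset (Fin n) // F ∈ Δ' ∧ (F.card : ℤ) = p + 1} := by
  classical
  exact Subtype.fintype _

/-- `∂ ∘ ∂ = 0` at the chains level, transferred from the ambient level. -/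
lemma boundary_sq (Δ' : Set (Finset (Fin n))) (T : V k n →ₗ[k] V k n)
    (comm : ∀ (q : ℤ) (f : Chains k Δ' q),
      emb k Δ' (q - 1) (boundary k Δ' q f) = T (emb k Δ' q f))
    (hTT : ∀ f : V k n, T (T f) = 0) (p : ℤ) (g : Chains k Δ' (p + 1)) :
    boundary k Δ' p (chainsCongr k Δ' (show p + 1 - 1 = p by ring)
      (boundary k Δ' (p + 1) g)) = 0 := by
  apply emb_inj k Δ' (p - 1)
  rw [map_zero, comm p, emb_chainsCongr, comm (p + 1) g, hTT]

lemma boundary_sq_complex (Δ' : Set (Finset (Fin n))) (hΔ' : IsComplex Δ')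
    (p : ℤ) (g : Chains k Δ' (p + 1)) :
    boundary k Δ' p (chainsCongr k Δ' (show p + 1 - 1 = p by ring)
      (boundary k Δ' (p + 1) g)) = 0 := by
  refine boundary_sq k Δ' (bdd k Δ') (fun q f => emb_boundary k Δ' hΔ' q f)
    (fun f => ?_) p g
  rw [bdd_bdd k Δ' (complex_hH Δ' hΔ')]

lemma boundary_sq_nf {Δ : Set (Finset (Fin n))} (hΔ : IsComplex Δ)
    (R : Finset (Fin n)) (p : ℤ) (g : Chains k (NFs Δ R) (p + 1)) :
    boundary k (NFs Δ R) p (chainsCongr k (NFs Δ R) (show p + 1 - 1 = p by ring)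
      (boundary k (NFs Δ R) (p + 1) g)) = 0 := by
  refine boundary_sq k (NFs Δ R) ((proj k (NFs Δ R)) ∘ₗ bdd k (splx R))
    (fun q f => emb_boundary_nf k R q f) (fun f => ?_) p g
  rw [LinearMap.comp_apply, LinearMap.comp_apply, proj_bdd_proj k hΔ,
    bdd_bdd k (splx R) (complex_hH (splx R) (splx_isComplex R)), map_zero]

lemma hTriv_iff_finrank (Δ' : Set (Finset (Fin n))) (p : ℤ)
    (hdd : ∀ g : Chains k Δ' (p + 1),
      boundary k Δ' p (chainsCongr k Δ' (show p + 1 - 1 = p by ring)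
        (boundary k Δ' (p + 1) g)) = 0) :
    HTriv k Δ' p ↔
      Module.finrank k (LinearMap.range (boundary k Δ' p)) +
        Module.finrank k (LinearMap.range (boundary k Δ' (p + 1))) =
      Fintype.card {F : Finset (Fin n) // F ∈ Δ' ∧ (F.card : ℤ) = p + 1} := by
  classical
  set B := boundary k Δ' p with hB
  set C := (chainsCongr k Δ' (show p + 1 - 1 = p by ring)).toLinearMap ∘ₗ
    boundary k Δ' (p + 1) with hC
  have hle : LinearMap.range C ≤ LinearMap.ker B := by
    rintro x ⟨g, rfl⟩
    exact LinearMap.mem_ker.2 (hdd g)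
  have hrkC : Module.finrank k (LinearMap.range C) =
      Module.finrank k (LinearMap.range (boundary k Δ' (p + 1))) := by
    rw [hC, LinearMap.range_comp]
    exact LinearEquiv.finrank_map_eq _ _
  have hrn : Module.finrank k (LinearMap.range B) +
      Module.finrank k (LinearMap.ker B) =
      Fintype.card {F : Finset (Fin n) // F ∈ Δ' ∧ (F.card : ℤ) = p + 1} := by
    rw [LinearMap.finrank_range_add_finrank_ker B]
    exact Module.finrank_fintype_fun_eq_card k
  have hiff : HTriv k Δ' p ↔ LinearMap.ker B ≤ LinearMap.range C := by
    constructor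
    · intro H x hx
      obtain ⟨g, hg⟩ := H x (LinearMap.mem_ker.1 hx)
      exact ⟨g, hg⟩
    · intro H f hf
      obtain ⟨g, hg⟩ := H (LinearMap.mem_ker.2 hf)
      exact ⟨g, hg⟩
  rw [hiff]
  constructor
  · intro H
    have heq : LinearMap.range C = LinearMap.ker B := le_antisymm hle H
    rw [← heq, hrkC] at hrn
    omega
  · intro H
    have heq : LinearMap.range C = LinearMap.ker B := by
      refine Submodule.eq_of_le_of_finrank_le hle ?_
      rw [hrkC]
      omega
    rw [heq]

lemma finrank_range_boundary_congr (Δ' : Set (Finset (Fin n))) {a b : ℤ}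
    (h : a = b) :
    Module.finrank k (LinearMap.range (boundary k Δ' a)) =
      Module.finrank k (LinearMap.range (boundary k Δ' b)) := by
  subst h; rfl

lemma card_idx_congr (Δ' : Set (Finset (Fin n))) {a b : ℤ} (h : a = b) :
    Fintype.card {F : Finset (Fin n) // F ∈ Δ' ∧ (F.card : ℤ) = a + 1} =
      Fintype.card {F : Finset (Fin n) // F ∈ Δ' ∧ (F.card : ℤ) = b + 1} := by
  subst h; rfl


/-! ### Combinatorial Alexander duality at the matrix level -/

lemma compl_union_compl (R G : Finset (Fin n)) : (G ∪ Rᶜ)ᶜ = R \ G := by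
  ext a
  simp only [Finset.mem_compl, Finset.mem_union, Finset.mem_sdiff]
  tauto

lemma mem_link_dual_iff {Δ : Set (Finset (Fin n))} {R G : Finset (Fin n)} :
    G ∈ link (dual Δ) Rᶜ ↔ G ⊆ R ∧ R \ G ∉ Δ := by
  constructor
  · rintro ⟨hdisj, hmem⟩
    refine ⟨?_, ?_⟩
    · have := disjoint_compl_right_iff.1 hdisj
      exact this
    · have : (G ∪ Rᶜ)ᶜ ∉ Δ := hmem
      rwa [compl_union_compl] at this
  · rintro ⟨hsub, hnf⟩
    refine ⟨disjoint_compl_right_iff.2 hsub, ?_⟩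
    show (G ∪ Rᶜ)ᶜ ∉ Δ
    rwa [compl_union_compl]

/-- The complementation bijection between faces of the link (in the dual) and
non-faces. -/
def idxCompl (Δ : Set (Finset (Fin n))) (R : Finset (Fin n)) (a b : ℤ)
    (hab : a + b + 2 = (R.card : ℤ)) :
    {F : Finset (Fin n) // F ∈ link (dual Δ) Rᶜ ∧ (F.card : ℤ) = a + 1} ≃
    {F : Finset (Fin n) // F ∈ NFs Δ R ∧ (F.card : ℤ) = b + 1} where
  toFun G := ⟨R \ G.1, ⟨⟨Finset.sdiff_subset, (mem_link_dual_iff.1 G.2.1).2⟩, by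
      have h1 := (mem_link_dual_iff.1 G.2.1).1
      have h2 := G.2.2
      rw [Finset.cast_card_sdiff h1, h2]
      omega⟩⟩
  invFun F := ⟨R \ F.1, ⟨mem_link_dual_iff.2 ⟨Finset.sdiff_subset, by
        rw [_root_.sdiff_sdiff_eq_self F.2.1.1]
        exact F.2.1.2⟩, by
      have h2 := F.2.2
      rw [Finset.cast_card_sdiff F.2.1.1, h2]
      omega⟩⟩
  left_inv G := Subtype.ext (_root_.sdiff_sdiff_eq_self (mem_link_dual_iff.1 G.2.1).1)
  right_inv F := Subtype.ext (_root_.sdiff_sdiff_eq_self F.2.1.1)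

lemma idxCompl_fst (Δ : Set (Finset (Fin n))) (R : Finset (Fin n)) (a b : ℤ)
    (hab : a + b + 2 = (R.card : ℤ))
    (G : {F : Finset (Fin n) // F ∈ link (dual Δ) Rᶜ ∧ (F.card : ℤ) = a + 1}) :
    (idxCompl Δ R a b hab G).1 = R \ G.1 := rfl

lemma cnt_sdiff_add {R A : Finset (Fin n)} (h : A ⊆ R) (x : Fin n) :
    cnt A x + cnt (R \ A) x = cnt R x := by
  classical
  unfold cnt
  rw [← Finset.card_union_of_disjoint
    (Finset.disjoint_filter_filter Finset.disjoint_sdiff),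
    ← Finset.filter_union, union_sdiff_of_subset h]

/-- The diagonal sign. -/
noncomputable def eps (R A : Finset (Fin n)) : k := (-1 : k) ^ (∑ y ∈ A, cnt R y)

lemma neg_one_pow_mod (a : ℕ) : ((-1 : k)) ^ a = (-1) ^ (a % 2) := by
  conv_lhs => rw [← Nat.div_add_mod a 2]
  rw [pow_add, pow_mul, neg_one_sq, one_pow, one_mul]

lemma neg_one_pow_congr {a b : ℕ} (h : a % 2 = b % 2) : ((-1 : k)) ^ a = (-1) ^ b := by
  rw [neg_one_pow_mod, h, ← neg_one_pow_mod]

open Classical in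
/-- The key matrix identity: the boundary matrix of the link of the dual is,
up to signs, the transpose of the boundary matrix of the non-face complex. -/
lemma toMatrix_boundary_compl {Δ : Set (Finset (Fin n))} (R : Finset (Fin n))
    (q' j' : ℤ) (h1 : q' + (j' - 1) + 2 = (R.card : ℤ))
    (h2 : q' - 1 + j' + 2 = (R.card : ℤ))
    (G' : {F : Finset (Fin n) // F ∈ link (dual Δ) Rᶜ ∧ (F.card : ℤ) = q' - 1 + 1})
    (G : {F : Finset (Fin n) // F ∈ link (dual Δ) Rᶜ ∧ (F.card : ℤ) = q' + 1}) :
    LinearMap.toMatrix' (boundary k (link (dual Δ) Rᶜ) q') G' G =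
      eps k R G'.1 *
        (LinearMap.toMatrix' (boundary k (NFs Δ R) j')
          (idxCompl Δ R q' (j' - 1) h1 G) (idxCompl Δ R (q' - 1) j' h2 G')) *
      eps k R G.1 := by
  rw [LinearMap.toMatrix'_apply, LinearMap.toMatrix'_apply,
    boundary_apply', boundary_apply']
  rw [Finset.mul_sum, Finset.sum_mul]
  refine Finset.sum_congr rfl fun x _ => ?_
  have hGsub : G.1 ⊆ R := (mem_link_dual_iff.1 G.2.1).1
  have hG'sub : G'.1 ⊆ R := (mem_link_dual_iff.1 G'.2.1).1
  simp only [idxCompl_fst, Pi.single_apply]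
  by_cases hD : x ∉ G'.1 ∧ insert x G'.1 = G.1
  · -- the matching term
    have hxG : x ∈ G.1 := hD.2 ▸ Finset.mem_insert_self x G'.1
    have hxR : x ∈ R := hGsub hxG
    have hxRG' : x ∈ R \ G'.1 := Finset.mem_sdiff.2 ⟨hxR, hD.1⟩
    have e : R \ G.1 = (R \ G'.1).erase x := by
      rw [← hD.2, Finset.sdiff_insert]
    have e2 : insert x (R \ G.1) = R \ G'.1 := by
      rw [e, Finset.insert_erase hxRG']
    have hguardL : x ∉ G'.1 ∧ insert x G'.1 ∈ link (dual Δ) Rᶜ :=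
      ⟨hD.1, hD.2 ▸ G.2.1⟩
    have hmemNF : R \ G'.1 ∈ NFs Δ R :=
      ⟨Finset.sdiff_subset, (mem_link_dual_iff.1 G'.2.1).2⟩
    have hguardR : x ∉ R \ G.1 ∧ insert x (R \ G.1) ∈ NFs Δ R := by
      refine ⟨fun hc => (Finset.mem_sdiff.1 hc).2 hxG, ?_⟩
      rw [e2]
      exact hmemNF
    rw [dif_pos hguardL, dif_pos hguardR]
    rw [if_pos (Subtype.ext hD.2), if_pos]
    swap
    · exact Subtype.ext e2
    rw [mul_one, mul_one]
    -- sign bookkeeping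
    have s1 : ∑ y ∈ G.1, cnt R y = cnt R x + ∑ y ∈ G'.1, cnt R y := by
      rw [← hD.2, Finset.sum_insert hD.1]
    have s2 : cnt (R \ G'.1) x = cnt (R \ G.1) x := by
      have := cnt_erase hxRG' x
      rw [if_neg (lt_irrefl x), add_zero, ← e] at this
      omega
    have s3 : cnt G'.1 x + cnt (R \ G'.1) x = cnt R x := cnt_sdiff_add hG'sub x
    show ((-1 : k)) ^ cnt G'.1 x =
      eps k R G'.1 * ((-1 : k)) ^ cnt (R \ G.1) x * eps k R G.1
    have hcollect : eps k R G'.1 * ((-1 : k)) ^ cnt (R \ G.1) x * eps k R G.1 =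
        ((-1 : k)) ^ ((∑ y ∈ G'.1, cnt R y) + cnt (R \ G.1) x + (∑ y ∈ G.1, cnt R y)) := by
      unfold eps
      rw [pow_add, pow_add]
    rw [hcollect]
    refine neg_one_pow_congr (k := k) ?_
    omega
  · -- both sides vanish
    have hL : (if h : x ∉ G'.1 ∧ insert x G'.1 ∈ link (dual Δ) Rᶜ then
        (-1 : k) ^ (G'.1.filter (fun y => y < x)).card *
          (if (⟨insert x G'.1, h.2, by
              have hc := G'.2.2
              rw [Finset.card_insert_of_notMem h.1]
              push_cast at hc ⊢
              omega⟩ :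
            {F : Finset (Fin n) // F ∈ link (dual Δ) Rᶜ ∧ (F.card : ℤ) = q' + 1}) = G
            then (1 : k) else 0)
        else 0) = 0 := by
      by_cases hg : x ∉ G'.1 ∧ insert x G'.1 ∈ link (dual Δ) Rᶜ
      · rw [dif_pos hg, if_neg, mul_zero]
        intro hEq
        exact hD ⟨hg.1, congrArg Subtype.val hEq⟩
      · rw [dif_neg hg]
    have hR : (if h : x ∉ R \ G.1 ∧ insert x (R \ G.1) ∈ NFs Δ R then
        (-1 : k) ^ ((R \ G.1).filter (fun y => y < x)).card *
          (if (⟨insert x (R \ G.1), h.2, by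
              have hc := (idxCompl Δ R q' (j' - 1) h1 G).2.2
              rw [idxCompl_fst] at hc
              rw [Finset.card_insert_of_notMem h.1]
              push_cast at hc ⊢
              omega⟩ :
            {F : Finset (Fin n) // F ∈ NFs Δ R ∧ (F.card : ℤ) = j' + 1}) =
              idxCompl Δ R (q' - 1) j' h2 G'
            then (1 : k) else 0)
        else 0) = 0 := by
      by_cases hg : x ∉ R \ G.1 ∧ insert x (R \ G.1) ∈ NFs Δ R
      · rw [dif_pos hg, if_neg, mul_zero]
        intro hEq
        have hEq' : insert x (R \ G.1) = R \ G'.1 := congrArg Subtype.val hEq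
        have hxRG' : x ∈ R \ G'.1 := hEq' ▸ Finset.mem_insert_self _ _
        have hxR : x ∈ R := (Finset.mem_sdiff.1 hxRG').1
        have hxnG' : x ∉ G'.1 := (Finset.mem_sdiff.1 hxRG').2
        have hxG : x ∈ G.1 := by
          by_contra hc
          exact hg.1 (Finset.mem_sdiff.2 ⟨hxR, hc⟩)
        have hcompl : G'.1 = G.1.erase x := by
          have e3 : G'.1 = R \ (R \ G'.1) := (_root_.sdiff_sdiff_eq_self hG'sub).symm
          rw [e3, ← hEq', Finset.sdiff_insert, _root_.sdiff_sdiff_eq_self hGsub]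
        refine hD ⟨hxnG', ?_⟩
        rw [hcompl, Finset.insert_erase hxG]
      · rw [dif_neg hg]
    rw [hL, hR, mul_zero, zero_mul]


lemma finrank_range_eq_rank_toMatrix' {ι κ : Type} [Fintype ι] [Fintype κ]
    [DecidableEq ι] [DecidableEq κ] (φ : (ι → k) →ₗ[k] (κ → k)) :
    Module.finrank k (LinearMap.range φ) = (LinearMap.toMatrix' φ).rank := by
  rw [Matrix.rank_eq_finrank_range_toLin (LinearMap.toMatrix' φ)
    (Pi.basisFun k κ) (Pi.basisFun k ι), Matrix.toLin_eq_toLin',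
    Matrix.toLin'_toMatrix']

lemma rank_submatrix_rect {α β γ δ : Type} [Fintype α] [Fintype β] [Fintype γ]
    [Fintype δ] (M : Matrix α β k) (e₁ : γ ≃ α) (e₂ : δ ≃ β) :
    (M.submatrix e₁ e₂).rank = M.rank := by
  have h : M.submatrix (e₁ : γ → α) (e₂ : δ → β) =
      Matrix.reindex e₁.symm e₂.symm M := by
    rw [Matrix.reindex_apply, Equiv.symm_symm, Equiv.symm_symm]
  rw [h, Matrix.rank, Matrix.rank, Matrix.mulVecLin_reindex, LinearMap.range_comp,
    LinearMap.range_comp, LinearEquiv.range, Submodule.map_top,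
    LinearEquiv.finrank_map_eq]

lemma isUnit_det_diagonal_eps {ι : Type} [Fintype ι] [DecidableEq ι]
    (R : Finset (Fin n)) (w : ι → Finset (Fin n)) :
    IsUnit (Matrix.diagonal (fun i : ι => eps k R (w i))).det := by
  rw [Matrix.det_diagonal]
  refine isUnit_iff_ne_zero.2 (Finset.prod_ne_zero_iff.2 fun i _ => ?_)
  unfold eps
  exact pow_ne_zero _ (neg_ne_zero.2 one_ne_zero)

/-- Alexander duality for ranks of boundary maps. -/
lemma finrank_range_boundary_compl {Δ : Set (Finset (Fin n))}
    (R : Finset (Fin n)) (q' j' : ℤ) (hj : q' + j' + 1 = (R.card : ℤ)) :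
    Module.finrank k (LinearMap.range (boundary k (link (dual Δ) Rᶜ) q')) =
      Module.finrank k (LinearMap.range (boundary k (NFs Δ R) j')) := by
  classical
  have h1 : q' + (j' - 1) + 2 = (R.card : ℤ) := by omega
  have h2 : q' - 1 + j' + 2 = (R.card : ℤ) := by omega
  set cA := idxCompl Δ R q' (j' - 1) h1 with hcA
  set cB := idxCompl Δ R (q' - 1) j' h2 with hcB
  set N := LinearMap.toMatrix' (boundary k (NFs Δ R) j') with hN
  have key : LinearMap.toMatrix' (boundary k (link (dual Δ) Rᶜ) q') =
      (Matrix.diagonal fun G' : {F : Finset (Fin n) //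
          F ∈ link (dual Δ) Rᶜ ∧ (F.card : ℤ) = q' - 1 + 1} => eps k R G'.1) *
        ((N.transpose.submatrix cB cA) *
          Matrix.diagonal fun G : {F : Finset (Fin n) //
            F ∈ link (dual Δ) Rᶜ ∧ (F.card : ℤ) = q' + 1} => eps k R G.1) := by
    ext G' G
    rw [Matrix.diagonal_mul, Matrix.mul_diagonal, Matrix.submatrix_apply,
      Matrix.transpose_apply]
    rw [toMatrix_boundary_compl k R q' j' h1 h2 G' G]
    ring
  have hdet1 : IsUnit (Matrix.diagonal fun G' : {F : Finset (Fin n) //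
      F ∈ link (dual Δ) Rᶜ ∧ (F.card : ℤ) = q' - 1 + 1} => eps k R G'.1).det := by
    rw [Matrix.det_diagonal]
    refine isUnit_iff_ne_zero.2 (Finset.prod_ne_zero_iff.2 fun i _ => ?_)
    unfold eps
    exact pow_ne_zero _ (neg_ne_zero.2 one_ne_zero)
  have hdet2 : IsUnit (Matrix.diagonal fun G : {F : Finset (Fin n) //
      F ∈ link (dual Δ) Rᶜ ∧ (F.card : ℤ) = q' + 1} => eps k R G.1).det := by
    rw [Matrix.det_diagonal]
    refine isUnit_iff_ne_zero.2 (Finset.prod_ne_zero_iff.2 fun i _ => ?_)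
    unfold eps
    exact pow_ne_zero _ (neg_ne_zero.2 one_ne_zero)
  rw [finrank_range_eq_rank_toMatrix', finrank_range_eq_rank_toMatrix', key]
  rw [Matrix.rank_mul_eq_right_of_isUnit_det _ _ hdet1]
  rw [Matrix.rank_mul_eq_left_of_isUnit_det _ _ hdet2]
  rw [rank_submatrix_rect k N.transpose cB cA, Matrix.rank_transpose]

/-- Alexander duality for homology triviality. -/
lemma hTriv_link_iff_nf {Δ : Set (Finset (Fin n))} (hΔ : IsComplex Δ)
    (R : Finset (Fin n)) (q jN : ℤ) (hq : q + jN + 2 = (R.card : ℤ)) :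
    HTriv k (link (dual Δ) Rᶜ) q ↔ HTriv k (NFs Δ R) jN := by
  rw [hTriv_iff_finrank k _ q
      (boundary_sq_complex k _ (link_isComplex (dual_isComplex hΔ) _) q),
    hTriv_iff_finrank k _ jN (boundary_sq_nf k hΔ R jN)]
  have r1 : Module.finrank k (LinearMap.range (boundary k (link (dual Δ) Rᶜ) q)) =
      Module.finrank k (LinearMap.range (boundary k (NFs Δ R) (jN + 1))) := by
    rw [finrank_range_boundary_compl k R q (jN + 1) (by omega)]
  have r2 : Module.finrank k
      (LinearMap.range (boundary k (link (dual Δ) Rᶜ) (q + 1))) =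
      Module.finrank k (LinearMap.range (boundary k (NFs Δ R) jN)) := by
    rw [finrank_range_boundary_compl k R (q + 1) jN (by omega)]
  have hcard : Fintype.card {F : Finset (Fin n) //
      F ∈ link (dual Δ) Rᶜ ∧ (F.card : ℤ) = q + 1} =
      Fintype.card {F : Finset (Fin n) //
        F ∈ NFs Δ R ∧ (F.card : ℤ) = jN + 1} :=
    Fintype.card_congr (idxCompl Δ R q jN (by omega))
  rw [r1, r2, hcard]
  omega


/-! ### Dimension bookkeeping and final assembly -/

lemma card_le_n (F : Finset (Fin n)) : F.card ≤ n := by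
  have := Finset.card_le_univ F
  rwa [Fintype.card_fin] at this

lemma frame_dual_dim {Δ : Set (Finset (Fin n))} {c ds : ℕ}
    (hc : IsFrame Δ c) (hds : IsDim (dual Δ) ds) :
    c + 1 ≤ n ∧ ds + c + 1 = n := by
  obtain ⟨F, hFc, hFn⟩ := hc.2
  have hFle : F.card ≤ n := card_le_n F
  have h1 : c + 1 ≤ n := hFc ▸ hFle
  have hFcmem : Fᶜ ∈ dual Δ := by
    show Fᶜᶜ ∉ Δ
    rwa [compl_compl]
  have hFccard : Fᶜ.card = n - (c + 1) := by
    rw [Finset.card_compl, Fintype.card_fin, hFc]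
  have hlow : n - (c + 1) ≤ ds := hFccard ▸ hds.1 Fᶜ hFcmem
  obtain ⟨G, hG, hGc⟩ := hds.2
  have hGcomp : ¬ Gᶜ.card ≤ c := fun hle => hG (hc.1 Gᶜ hle)
  have hGcc : Gᶜ.card = n - G.card := by rw [Finset.card_compl, Fintype.card_fin]
  have hGle : G.card ≤ n := card_le_n G
  exact ⟨h1, by omega⟩

lemma card_compl_int (R : Finset (Fin n)) : ((Rᶜ : Finset (Fin n)).card : ℤ) =
    (n : ℤ) - R.card := by
  have h1 : R.card ≤ n := card_le_n R
  have h2 : (Rᶜ : Finset (Fin n)).card = n - R.card := by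
    rw [Finset.card_compl, Fintype.card_fin]
  omega

lemma comm_restrict {Δ : Set (Finset (Fin n))} (hΔ : IsComplex Δ)
    (R : Finset (Fin n)) (q : ℤ) (f : Chains k (restrict Δ R) q) :
    emb k (restrict Δ R) (q - 1) (boundary k (restrict Δ R) q f) =
      bdd k (splx R) (emb k (restrict Δ R) q f) := by
  rw [emb_boundary k (restrict Δ R) (restrict_isComplex hΔ R) q f]
  exact (bdd_congr_subset k (fun F hF => hF.2) _
    (fun F hF => (emb_suppIn k (restrict Δ R) q f F hF).1)).symm

lemma hTriv_restrict_of_mem {Δ : Set (Finset (Fin n))} (hΔ : IsComplex Δ)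
    {R : Finset (Fin n)} (hR : R ∈ Δ) (p : ℤ) (hp : 0 ≤ p) :
    HTriv k (restrict Δ R) p := by
  have hrestrict : restrict Δ R = splx R :=
    Set.ext fun F => ⟨fun h => h.2, fun h => ⟨hΔ R hR F h, h⟩⟩
  by_cases hRe : R = ∅
  · intro f hf
    refine ⟨0, ?_⟩
    funext G
    exfalso
    have hGe : G.1 = ∅ := Finset.subset_empty.mp (hRe ▸ G.2.1.2)
    have := G.2.2
    rw [hGe, Finset.card_empty] at this
    push_cast at this
    omega
  · obtain ⟨v, hv⟩ := Finset.nonempty_iff_ne_empty.2 hRe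
    rw [hTriv_iff_vTriv k (restrict Δ R) (bdd k (splx R)) (comm_restrict k hΔ R) p]
    rw [hrestrict]
    exact splx_exact k hv (p + 1)

/-- `Δ` is CLeray iff `Δ*` is Cohen-Macaulay. -/
theorem stmt4 (k : Type) [Field k] {n : ℕ} (Δ : Set (Finset (Fin n)))
    (hΔ : IsComplex Δ) (c ds : ℕ) (hc : IsFrame Δ c)
    (hds : IsDim (dual Δ) ds) :
    (∀ p : ℤ, (c : ℤ) ≤ p → ∀ R : Finset (Fin n),
        Subsingleton (ReducedHomology k (restrict Δ R) p)) ↔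
    (∀ S ∈ dual Δ, ∀ p : ℤ, p + S.card ≤ (ds : ℤ) - 2 →
        Subsingleton (ReducedHomology k (link (dual Δ) S) p)) := by
  obtain ⟨h1n, hdsEq⟩ := frame_dual_dim hc hds
  have hempty : (∅ : Finset (Fin n)) ∈ Δ := hc.1 ∅ (by simp)
  constructor
  · -- CLeray → Cohen-Macaulay
    intro H S hS q hq
    set R := Sᶜ with hRdef
    have hSR : S = Rᶜ := (compl_compl S).symm
    have hcardR : (R.card : ℤ) = (n : ℤ) - S.card := card_compl_int S
    have hRnot : R ∉ Δ := hS
    have hRne : R.Nonempty :=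
      Finset.nonempty_iff_ne_empty.2 (fun h => hRnot (h ▸ hempty))
    obtain ⟨v, hv⟩ := hRne
    set jN : ℤ := (R.card : ℤ) - q - 2 with hjN
    have hple : (c : ℤ) ≤ jN - 1 := by
      have hq' := hq
      omega
    have hHp : HTriv k (restrict Δ R) (jN - 1) :=
      (subsingleton_iff_hTriv k (restrict Δ R) (jN - 1)).1 (H (jN - 1) hple R)
    have hVΓ : VTriv k (restrict Δ R) (bdd k (splx R)) jN := by
      have := (hTriv_iff_vTriv k (restrict Δ R) (bdd k (splx R))
        (comm_restrict k hΔ R) (jN - 1)).1 hHp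
      rwa [show jN - 1 + 1 = jN by ring] at this
    have hVNF := chase_forward k hΔ hv jN hVΓ
    have hHNF : HTriv k (NFs Δ R) jN :=
      (hTriv_iff_vTriv k (NFs Δ R) ((proj k (NFs Δ R)) ∘ₗ bdd k (splx R))
        (fun q' f => emb_boundary_nf k R q' f) jN).2 hVNF
    have hHlink : HTriv k (link (dual Δ) Rᶜ) q :=
      (hTriv_link_iff_nf k hΔ R q jN (by omega)).2 hHNF
    rw [hSR]
    exact (subsingleton_iff_hTriv k (link (dual Δ) Rᶜ) q).2 hHlink
  · -- Cohen-Macaulay → CLeray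
    intro H p hp R
    rw [subsingleton_iff_hTriv]
    by_cases hR : R ∈ Δ
    · exact hTriv_restrict_of_mem k hΔ hR p (by omega)
    · have hS : Rᶜ ∈ dual Δ := by
        show Rᶜᶜ ∉ Δ
        rwa [compl_compl]
      have hcardS : ((Rᶜ : Finset (Fin n)).card : ℤ) = (n : ℤ) - R.card :=
        card_compl_int R
      have hRne : R.Nonempty :=
        Finset.nonempty_iff_ne_empty.2 (fun h => hR (h ▸ hempty))
      obtain ⟨v, hv⟩ := hRne
      set q : ℤ := (R.card : ℤ) - p - 3 with hqdef
      have hq2 : q + ((Rᶜ : Finset (Fin n)).card : ℤ) ≤ (ds : ℤ) - 2 := by omega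
      have hHlink : HTriv k (link (dual Δ) Rᶜ) q :=
        (subsingleton_iff_hTriv k (link (dual Δ) Rᶜ) q).1 (H Rᶜ hS q hq2)
      have hHNF : HTriv k (NFs Δ R) (p + 1) :=
        (hTriv_link_iff_nf k hΔ R q (p + 1) (by omega)).1 hHlink
      have hVNF : VTriv k (NFs Δ R) ((proj k (NFs Δ R)) ∘ₗ bdd k (splx R))
          (p + 1 + 1) :=
        (hTriv_iff_vTriv k (NFs Δ R) ((proj k (NFs Δ R)) ∘ₗ bdd k (splx R))
          (fun q' f => emb_boundary_nf k R q' f) (p + 1)).1 hHNF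
      have hVΓ : VTriv k (restrict Δ R) (bdd k (splx R)) (p + 1) :=
        chase_backward k hΔ hv (p + 1) hVNF
      exact (hTriv_iff_vTriv k (restrict Δ R) (bdd k (splx R))
        (comm_restrict k hΔ R) p).2 hVΓ

end SCx
end

section
/- A simplicial complex Δ on [n] with frame dimension c-1 is CLeray if and only if H̃_c(lk_Δ S) = 0 for all faces S of Δ. -/
open Finset

namespace SCx

variable (k : Type) [Field k] {n : ℕ}

set_option linter.unusedSectionVars false

section Engine

/-- `ℕ`-graded chains: functions on faces of cardinality exactly `m`. -/
abbrev FChains (Δ : Set (Finset (Fin n))) (m : ℕ) : Type :=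
  {F : Finset (Fin n) // F ∈ Δ ∧ F.card = m} → k

open Classical in
/-- `ℕ`-graded boundary map. -/
noncomputable def Fb (Δ : Set (Finset (Fin n))) (m : ℕ) (f : FChains k Δ (m+1)) :
    FChains k Δ m := fun G => ∑ x : Fin n,
  if h : x ∉ G.1 ∧ insert x G.1 ∈ Δ then
    (-1 : k) ^ (G.1.filter (fun y => y < x)).card *
      f ⟨insert x G.1, h.2, by rw [Finset.card_insert_of_notMem h.1, G.2.2]⟩
  else 0

variable {Δ' : Set (Finset (Fin n))}

lemma FChains.congr {m : ℕ} (f : FChains k Δ' m) {F G : {F // F ∈ Δ' ∧ F.card = m}}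
    (h : F.1 = G.1) : f F = f G := congrArg f (Subtype.ext h)

lemma Fb_add (m : ℕ) (f g : FChains k Δ' (m+1)) :
    Fb k Δ' m (f + g) = Fb k Δ' m f + Fb k Δ' m g := by
  funext G
  unfold Fb
  rw [Pi.add_apply, ← Finset.sum_add_distrib]
  refine Finset.sum_congr rfl fun x _ => ?_
  split_ifs with h
  · rw [Pi.add_apply]; ring
  · rw [add_zero]

lemma Fb_sub (m : ℕ) (f g : FChains k Δ' (m+1)) :
    Fb k Δ' m (f - g) = Fb k Δ' m f - Fb k Δ' m g := by
  funext G
  unfold Fb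
  rw [Pi.sub_apply, ← Finset.sum_sub_distrib]
  refine Finset.sum_congr rfl fun x _ => ?_
  split_ifs with h
  · rw [Pi.sub_apply]; ring
  · rw [sub_zero]

lemma Fb_neg (m : ℕ) (f : FChains k Δ' (m+1)) :
    Fb k Δ' m (-f) = - Fb k Δ' m f := by
  funext G
  unfold Fb
  rw [Pi.neg_apply, ← Finset.sum_neg_distrib]
  refine Finset.sum_congr rfl fun x _ => ?_
  split_ifs with h
  · rw [Pi.neg_apply]; ring
  · rw [neg_zero]

lemma sign_filter_insert (x y : Fin n) (G : Finset (Fin n)) (hx : x ∉ G) :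
    (-1 : k) ^ (((insert x G).filter (fun z => z < y)).card)
      = (if x < y then (-1:k) else 1) * (-1 : k) ^ ((G.filter (fun z => z < y)).card) := by
  rw [Finset.filter_insert]
  split_ifs with h
  · rw [Finset.card_insert_of_notMem (fun hc => hx (Finset.mem_of_mem_filter x hc))]
    rw [pow_succ]
    ring
  · rw [one_mul]

open Classical in
/-- Auxiliary double-sum term for the proof that the boundary squares to zero. -/
private noncomputable def TT (Δ' : Set (Finset (Fin n))) (m : ℕ) (G : Finset (Fin n))
    (hGc : G.card = m) (f : FChains k Δ' (m+2)) (x y : Fin n) : k :=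
  if h : x ∉ G ∧ y ∉ G ∧ x ≠ y ∧ insert y (insert x G) ∈ Δ' then
    (-1 : k) ^ ((G.filter (fun z => z < x)).card) *
      (-1 : k) ^ (((insert x G).filter (fun z => z < y)).card) *
      f ⟨insert y (insert x G), h.2.2.2, by
        rw [Finset.card_insert_of_notMem (fun hy => by
          rcases Finset.mem_insert.mp hy with h1 | h1
          · exact h.2.2.1 h1.symm
          · exact h.2.1 h1),
          Finset.card_insert_of_notMem h.1, hGc]⟩
  else 0

private lemma TT_diag (m : ℕ) (G : Finset (Fin n)) (hGc : G.card = m)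
    (f : FChains k Δ' (m+2)) (x : Fin n) : TT k Δ' m G hGc f x x = 0 :=
  dif_neg (fun h => h.2.2.1 rfl)

private lemma TT_anti (m : ℕ) (G : Finset (Fin n)) (hGc : G.card = m)
    (f : FChains k Δ' (m+2)) (x y : Fin n) :
    TT k Δ' m G hGc f x y + TT k Δ' m G hGc f y x = 0 := by
  by_cases hc : x ∉ G ∧ y ∉ G ∧ x ≠ y ∧ insert y (insert x G) ∈ Δ'
  · have hc' : y ∉ G ∧ x ∉ G ∧ y ≠ x ∧ insert x (insert y G) ∈ Δ' :=
      ⟨hc.2.1, hc.1, hc.2.2.1.symm, by rw [Finset.insert_comm]; exact hc.2.2.2⟩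
    unfold TT
    rw [dif_pos hc, dif_pos hc']
    have hfe : f ⟨insert x (insert y G), hc'.2.2.2, by
          rw [Finset.card_insert_of_notMem (fun hy => by
            rcases Finset.mem_insert.mp hy with h1 | h1
            · exact hc'.2.2.1 h1.symm
            · exact hc'.2.1 h1),
            Finset.card_insert_of_notMem hc'.1, hGc]⟩
        = f ⟨insert y (insert x G), hc.2.2.2, by
          rw [Finset.card_insert_of_notMem (fun hy => by
            rcases Finset.mem_insert.mp hy with h1 | h1
            · exact hc.2.2.1 h1.symm
            · exact hc.2.1 h1),
            Finset.card_insert_of_notMem hc.1, hGc]⟩ :=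
      FChains.congr k f (Finset.insert_comm x y G)
    rw [hfe]
    rw [sign_filter_insert k x y G hc.1, sign_filter_insert k y x G hc.2.1]
    rcases hc.2.2.1.lt_or_gt with h | h
    · rw [if_pos h, if_neg (asymm h)]; ring
    · rw [if_neg (asymm h), if_pos h]; ring
  · have hc' : ¬ (y ∉ G ∧ x ∉ G ∧ y ≠ x ∧ insert x (insert y G) ∈ Δ') := fun h2 =>
      hc ⟨h2.2.1, h2.1, h2.2.2.1.symm, by rw [Finset.insert_comm]; exact h2.2.2.2⟩
    unfold TT
    rw [dif_neg hc, dif_neg hc', add_zero]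

/-- The boundary map squares to zero on a simplicial complex. -/
lemma Fb_Fb (hΔ' : IsComplex Δ') (m : ℕ) (f : FChains k Δ' (m+2)) :
    Fb k Δ' m (Fb k Δ' (m+1) f) = 0 := by
  classical
  funext G
  obtain ⟨G, hG, hGc⟩ := G
  show Fb k Δ' m (Fb k Δ' (m+1) f) ⟨G, hG, hGc⟩ = 0
  have hbody : Fb k Δ' m (Fb k Δ' (m+1) f) ⟨G, hG, hGc⟩
      = ∑ x : Fin n, ∑ y : Fin n, TT k Δ' m G hGc f x y := by
    unfold Fb
    refine Finset.sum_congr rfl fun x _ => ?_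
    by_cases hx : x ∉ G ∧ insert x G ∈ Δ'
    · rw [dif_pos hx, Finset.mul_sum]
      refine Finset.sum_congr rfl fun y _ => ?_
      by_cases hy : y ∉ insert x G ∧ insert y (insert x G) ∈ Δ'
      · rw [dif_pos hy]
        have hcond : x ∉ G ∧ y ∉ G ∧ x ≠ y ∧ insert y (insert x G) ∈ Δ' :=
          ⟨hx.1, fun h1 => hy.1 (Finset.mem_insert_of_mem h1),
            fun h1 => hy.1 (h1 ▸ Finset.mem_insert_self y G), hy.2⟩
        unfold TT
        rw [dif_pos hcond, mul_assoc]
      · rw [dif_neg hy, mul_zero]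
        have hcond : ¬ (x ∉ G ∧ y ∉ G ∧ x ≠ y ∧ insert y (insert x G) ∈ Δ') := fun h2 =>
          hy ⟨fun h1 => by
            rcases Finset.mem_insert.mp h1 with h3 | h3
            · exact h2.2.2.1 h3.symm
            · exact h2.2.1 h3, h2.2.2.2⟩
        unfold TT
        rw [dif_neg hcond]
    · rw [dif_neg hx]
      symm
      refine Finset.sum_eq_zero fun y _ => ?_
      unfold TT
      refine dif_neg fun h2 => hx ⟨h2.1, hΔ' _ h2.2.2.2 _ (Finset.subset_insert y _)⟩
  rw [hbody, ← Finset.sum_product']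
  refine Finset.sum_involution (fun p _ => (p.2, p.1))
    (fun p _ => TT_anti k m G hGc f p.1 p.2)
    (fun p _ hp hep => ?_) (fun p _ => Finset.mem_univ _) (fun p _ => rfl)
  apply hp
  have h1 : p.1 = p.2 := (congrArg Prod.fst hep).symm
  rw [h1]
  exact TT_diag k m G hGc f p.2

end Engine

section Triple

variable {Δ : Set (Finset (Fin n))} {v : Fin n} {R S : Finset (Fin n)}

lemma mem_sub {Δ : Set (Finset (Fin n))} {F R S : Finset (Fin n)} :
    F ∈ sub Δ R S ↔ F ⊆ R ∧ F ∪ S ∈ Δ := Iff.rfl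

/-- Extension by zero from the deletion `A = Δ_R^S` into `X = Δ_{R ∪ v}^S`. -/
noncomputable def iot (Δ : Set (Finset (Fin n))) (v : Fin n) (R S : Finset (Fin n)) (m : ℕ)
    (f : FChains k (sub Δ R S) m) : FChains k (sub Δ (insert v R) S) m := fun F =>
  if h : v ∈ F.1 then 0 else
    f ⟨F.1, mem_sub.mpr ⟨(Finset.subset_insert_iff_of_notMem h).mp (mem_sub.mp F.2.1).1,
      (mem_sub.mp F.2.1).2⟩, F.2.2⟩

/-- Restriction from `X` to `A`. -/
noncomputable def alp (Δ : Set (Finset (Fin n))) (v : Fin n) (R S : Finset (Fin n)) (m : ℕ)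
    (f : FChains k (sub Δ (insert v R) S) m) : FChains k (sub Δ R S) m := fun F =>
  f ⟨F.1, mem_sub.mpr ⟨(mem_sub.mp F.2.1).1.trans (Finset.subset_insert v R),
    (mem_sub.mp F.2.1).2⟩, F.2.2⟩

/-- The "divide by `v`" map from `X` to the link `L = Δ_R^{S ∪ v}`. -/
noncomputable def sig (Δ : Set (Finset (Fin n))) (v : Fin n) (R S : Finset (Fin n))
    (hv : v ∉ R) (m : ℕ)
    (f : FChains k (sub Δ (insert v R) S) (m+1)) :
    FChains k (sub Δ R (insert v S)) m := fun G =>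
  (-1 : k) ^ ((G.1.filter (fun z => z < v)).card) *
    f ⟨insert v G.1, mem_sub.mpr ⟨Finset.insert_subset_insert v (mem_sub.mp G.2.1).1, by
        rw [Finset.insert_union, ← Finset.union_insert]
        exact (mem_sub.mp G.2.1).2⟩, by
      rw [Finset.card_insert_of_notMem (fun hvG => hv ((mem_sub.mp G.2.1).1 hvG)), G.2.2]⟩

/-- The "multiply by `v`" map from the link `L` into `X`. -/
noncomputable def tau (Δ : Set (Finset (Fin n))) (v : Fin n) (R S : Finset (Fin n))
    (m : ℕ) (g : FChains k (sub Δ R (insert v S)) m) :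
    FChains k (sub Δ (insert v R) S) (m+1) := fun F =>
  if h : v ∈ F.1 then
    (-1 : k) ^ (((F.1.erase v).filter (fun z => z < v)).card) *
      g ⟨F.1.erase v, mem_sub.mpr ⟨Finset.subset_insert_iff.mp (mem_sub.mp F.2.1).1, by
          rw [Finset.union_insert, ← Finset.insert_union, Finset.insert_erase h]
          exact (mem_sub.mp F.2.1).2⟩, by
        have h2 := F.2.2; rw [Finset.card_erase_of_mem h]; omega⟩
  else 0

lemma alp_iot (hv : v ∉ R) (m : ℕ) (f : FChains k (sub Δ R S) m) :
    alp k Δ v R S m (iot k Δ v R S m f) = f := by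
  funext F
  unfold alp iot
  rw [dif_neg (fun h => hv ((mem_sub.mp F.2.1).1 h))]

lemma iot_zero (m : ℕ) : iot k Δ v R S m (0 : FChains k (sub Δ R S) m) = 0 := by
  funext F
  unfold iot
  split_ifs <;> rfl

lemma iot_eq_zero (hv : v ∉ R) (m : ℕ) {f : FChains k (sub Δ R S) m}
    (h : iot k Δ v R S m f = 0) : f = 0 := by
  have := congrArg (alp k Δ v R S m) h
  rwa [alp_iot k hv, show alp k Δ v R S m 0 = 0 from rfl] at this

lemma sig_tau (m : ℕ) (g : FChains k (sub Δ R (insert v S)) m) :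
    sig k Δ v R S hv m (tau k Δ v R S m g) = g := by
  funext G
  have hvG : v ∉ G.1 := fun h => hv ((mem_sub.mp G.2.1).1 h)
  unfold sig tau
  rw [dif_pos (Finset.mem_insert_self v G.1)]
  have he : (insert v G.1).erase v = G.1 := Finset.erase_insert hvG
  rw [FChains.congr k g he, he, ← mul_assoc, ← pow_add, Even.neg_one_pow ⟨_, rfl⟩, one_mul]

lemma sig_iot (m : ℕ) (f : FChains k (sub Δ R S) (m+1)) :
    sig k Δ v R S hv m (iot k Δ v R S (m+1) f) = 0 := by
  funext G
  unfold sig iot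
  rw [dif_pos (Finset.mem_insert_self v G.1), mul_zero]
  rfl

lemma sig_add (m : ℕ) (f g : FChains k (sub Δ (insert v R) S) (m+1)) :
    sig k Δ v R S hv m (f + g) = sig k Δ v R S hv m f + sig k Δ v R S hv m g := by
  funext G
  unfold sig
  rw [Pi.add_apply, Pi.add_apply]
  ring

lemma sig_sub (m : ℕ) (f g : FChains k (sub Δ (insert v R) S) (m+1)) :
    sig k Δ v R S hv m (f - g) = sig k Δ v R S hv m f - sig k Δ v R S hv m g := by
  funext G
  unfold sig
  rw [Pi.sub_apply, Pi.sub_apply]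
  ring

lemma decomp (m : ℕ) (f : FChains k (sub Δ (insert v R) S) (m+1)) :
    f = iot k Δ v R S (m+1) (alp k Δ v R S (m+1) f)
      + tau k Δ v R S m (sig k Δ v R S hv m f) := by
  funext F
  rw [Pi.add_apply]
  by_cases hF : v ∈ F.1
  · unfold iot tau
    rw [dif_pos hF, dif_pos hF, zero_add]
    unfold sig
    have he : insert v (F.1.erase v) = F.1 := Finset.insert_erase hF
    have hval : ∀ (h1 : insert v (F.1.erase v) ∈ sub Δ (insert v R) S)
        (h2 : (insert v (F.1.erase v)).card = m + 1),
        f ⟨insert v (F.1.erase v), h1, h2⟩ = f F := fun _ _ => congrArg f (Subtype.ext he)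
    rw [hval, ← mul_assoc, ← pow_add, Even.neg_one_pow ⟨_, rfl⟩, one_mul]
    · rw [he]; exact F.2.1
    · rw [he]; exact F.2.2
  · unfold iot tau
    rw [dif_neg hF, dif_neg hF, add_zero]
    unfold alp
    exact (FChains.congr k f rfl).symm

end Triple

section ChainMaps

variable {Δ : Set (Finset (Fin n))} {v : Fin n} {R S : Finset (Fin n)}

lemma iot_chain (hv : v ∉ R) (m : ℕ) (f : FChains k (sub Δ R S) (m+1)) :
    Fb k (sub Δ (insert v R) S) m (iot k Δ v R S (m+1) f)
      = iot k Δ v R S m (Fb k (sub Δ R S) m f) := by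
  funext G
  by_cases hG : v ∈ G.1
  · have hR : iot k Δ v R S m (Fb k (sub Δ R S) m f) G = 0 := by
      unfold iot; rw [dif_pos hG]
    rw [hR]
    unfold Fb
    refine Finset.sum_eq_zero fun x _ => ?_
    by_cases hx : x ∉ G.1 ∧ insert x G.1 ∈ sub Δ (insert v R) S
    · rw [dif_pos hx]
      unfold iot
      rw [dif_pos (Finset.mem_insert_of_mem hG), mul_zero]
    · rw [dif_neg hx]
  · unfold Fb iot
    rw [dif_neg hG]
    refine Finset.sum_congr rfl fun x _ => ?_
    by_cases hxv : x = v
    · subst hxv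
      have hA : ¬ (x ∉ G.1 ∧ insert x G.1 ∈ sub Δ R S) := fun h2 =>
        hv ((mem_sub.mp h2.2).1 (Finset.mem_insert_self x G.1))
      rw [dif_neg hA]
      by_cases hx : x ∉ G.1 ∧ insert x G.1 ∈ sub Δ (insert x R) S
      · rw [dif_pos hx, dif_pos (Finset.mem_insert_self x G.1), mul_zero]
      · rw [dif_neg hx]
    · have hvx : v ∉ insert x G.1 := fun h2 => by
        rcases Finset.mem_insert.mp h2 with h3 | h3
        · exact hxv h3.symm
        · exact hG h3
      have hiff : (x ∉ G.1 ∧ insert x G.1 ∈ sub Δ (insert v R) S)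
          ↔ (x ∉ G.1 ∧ insert x G.1 ∈ sub Δ R S) := by
        constructor
        · rintro ⟨h1, h2⟩
          exact ⟨h1, mem_sub.mpr ⟨(Finset.subset_insert_iff_of_notMem hvx).mp
            (mem_sub.mp h2).1, (mem_sub.mp h2).2⟩⟩
        · rintro ⟨h1, h2⟩
          exact ⟨h1, mem_sub.mpr ⟨(mem_sub.mp h2).1.trans (Finset.subset_insert v R),
            (mem_sub.mp h2).2⟩⟩
      by_cases hx : x ∉ G.1 ∧ insert x G.1 ∈ sub Δ R S
      · rw [dif_pos (hiff.mpr hx), dif_pos hx, dif_neg hvx]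
      · rw [dif_neg (fun h2 => hx (hiff.mp h2)), dif_neg hx]

lemma sig_chain (hv : v ∉ R) (m : ℕ) (f : FChains k (sub Δ (insert v R) S) (m+2)) :
    sig k Δ v R S hv m (Fb k (sub Δ (insert v R) S) (m+1) f)
      = - Fb k (sub Δ R (insert v S)) m (sig k Δ v R S hv (m+1) f) := by
  funext G
  rw [Pi.neg_apply]
  have hvG : v ∉ G.1 := fun h => hv ((mem_sub.mp G.2.1).1 h)
  have hGR : G.1 ⊆ R := (mem_sub.mp G.2.1).1
  unfold sig Fb
  rw [Finset.mul_sum, ← Finset.sum_neg_distrib]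
  refine Finset.sum_congr rfl fun x _ => ?_
  have hUnion : insert x (insert v G.1) ∪ S = insert x G.1 ∪ insert v S := by
    simp only [Finset.insert_union, Finset.union_insert]
    exact Finset.insert_comm x v _
  by_cases hc : x ∉ G.1 ∧ insert x G.1 ∈ sub Δ R (insert v S)
  · have hxR : x ∈ R := (mem_sub.mp hc.2).1 (Finset.mem_insert_self x G.1)
    have hxv : x ≠ v := fun h => hv (h ▸ hxR)
    have hcX : x ∉ insert v G.1 ∧ insert x (insert v G.1) ∈ sub Δ (insert v R) S := by
      refine ⟨fun h2 => ?_, mem_sub.mpr ⟨?_, ?_⟩⟩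
      · rcases Finset.mem_insert.mp h2 with h3 | h3
        · exact hxv h3
        · exact hc.1 h3
      · exact Finset.insert_subset_iff.mpr ⟨Finset.mem_insert_of_mem hxR,
          Finset.insert_subset_insert v hGR⟩
      · rw [hUnion]; exact (mem_sub.mp hc.2).2
    rw [dif_pos hcX, dif_pos hc]
    have hmem2 : insert v (insert x G.1) ∈ sub Δ (insert v R) S := by
      rw [Finset.insert_comm]; exact hcX.2
    have hcard2 : (insert v (insert x G.1)).card = m + 2 := by
      rw [Finset.insert_comm, Finset.card_insert_of_notMem hcX.1,
        Finset.card_insert_of_notMem hvG, G.2.2]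
    have hval : ∀ (h1 : insert x (insert v G.1) ∈ sub Δ (insert v R) S)
        (h2 : (insert x (insert v G.1)).card = m + 2),
        f ⟨insert x (insert v G.1), h1, h2⟩ = f ⟨insert v (insert x G.1), hmem2, hcard2⟩ :=
      fun _ _ => congrArg f (Subtype.ext (Finset.insert_comm x v G.1))
    rw [hval]
    beta_reduce
    rw [sign_filter_insert k v x G.1 hvG, sign_filter_insert k x v G.1 hc.1]
    rcases hxv.lt_or_gt with h | h
    · rw [if_pos h, if_neg (asymm h)]; ring
    · rw [if_neg (asymm h), if_pos h]; ring
    · exact hcX.2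
    · rw [Finset.card_insert_of_notMem hcX.1, Finset.card_insert_of_notMem hvG, G.2.2]
  · have hcX : ¬ (x ∉ insert v G.1 ∧ insert x (insert v G.1) ∈ sub Δ (insert v R) S) := by
      rintro ⟨h1, h2⟩
      apply hc
      have hxv : x ≠ v := fun h => h1 (h ▸ Finset.mem_insert_self v G.1)
      refine ⟨fun h3 => h1 (Finset.mem_insert_of_mem h3), mem_sub.mpr ⟨?_, ?_⟩⟩
      · intro y hy
        rcases Finset.mem_insert.mp hy with h3 | h3
        · subst h3
          have h5 := (mem_sub.mp h2).1 (Finset.mem_insert_self y _)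
          rcases Finset.mem_insert.mp h5 with h4 | h4
          · exact absurd h4 hxv
          · exact h4
        · exact hGR h3
      · rw [← hUnion]; exact (mem_sub.mp h2).2
    rw [dif_neg hcX, dif_neg hc, mul_zero, neg_zero]

end ChainMaps

section Exactness

variable {Δ : Set (Finset (Fin n))} {v : Fin n} {R S : Finset (Fin n)}

/-- Vanishing of reduced homology in (ℕ-graded) degree `m`. -/
def HV (Δ' : Set (Finset (Fin n))) (m : ℕ) : Prop :=
  ∀ f : FChains k Δ' (m+1), Fb k Δ' m f = 0 →
    ∃ g : FChains k Δ' (m+2), Fb k Δ' (m+1) g = f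

lemma HV_degenerate (Δ' : Set (Finset (Fin n))) (m : ℕ)
    (h : ∀ F ∈ Δ', F.card ≠ m + 1) : HV k Δ' m :=
  fun f _ => ⟨0, funext fun F => absurd F.2.2 (h F.1 F.2.1)⟩

lemma sub_isComplex (hΔ : IsComplex Δ) (R S : Finset (Fin n)) : IsComplex (sub Δ R S) :=
  fun F hF G hG => mem_sub.mpr ⟨hG.trans (mem_sub.mp hF).1,
    hΔ _ (mem_sub.mp hF).2 _ (Finset.union_subset_union hG (Finset.Subset.refl S))⟩

lemma sig_zero (hv : v ∉ R) (m : ℕ) :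
    sig k Δ v R S hv m (0 : FChains k (sub Δ (insert v R) S) (m+1)) = 0 := by
  funext G
  unfold sig
  rw [Pi.zero_apply, mul_zero]
  rfl

lemma tau_zero (m : ℕ) :
    tau k Δ v R S m (0 : FChains k (sub Δ R (insert v S)) m) = 0 := by
  funext F
  unfold tau
  split_ifs with h
  · rw [Pi.zero_apply, mul_zero]; rfl
  · rfl

lemma E1 (hΔ : IsComplex Δ) (hv : v ∉ R) (m : ℕ)
    (hA : HV k (sub Δ R S) (m+1)) (hL : HV k (sub Δ R (insert v S)) m) :
    HV k (sub Δ (insert v R) S) (m+1) := by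
  intro f hf
  have hw : Fb k (sub Δ R (insert v S)) m (sig k Δ v R S hv (m+1) f) = 0 := by
    have h2 := sig_chain (S := S) k hv m f
    rw [hf, sig_zero] at h2
    exact neg_eq_zero.mp h2.symm
  obtain ⟨u, hu⟩ := hL _ hw
  set f2 := f + Fb k (sub Δ (insert v R) S) (m+2) (tau k Δ v R S (m+2) u) with hf2
  have hf2cyc : Fb k (sub Δ (insert v R) S) (m+1) f2 = 0 := by
    rw [hf2, Fb_add, hf, Fb_Fb k (sub_isComplex hΔ _ _) (m+1), add_zero]
  have hsig2 : sig k Δ v R S hv (m+1) f2 = 0 := by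
    rw [hf2, sig_add, sig_chain k hv (m+1), sig_tau, hu]
    simp
  have hd := decomp k (hv := hv) (m+1) f2
  rw [hsig2, tau_zero, add_zero] at hd
  have hAcyc : Fb k (sub Δ R S) (m+1) (alp k Δ v R S (m+2) f2) = 0 := by
    refine iot_eq_zero k hv (m+1) ?_
    rw [← iot_chain k hv (m+1), ← hd, hf2cyc]
  obtain ⟨g, hg⟩ := hA _ hAcyc
  refine ⟨iot k Δ v R S (m+3) g - tau k Δ v R S (m+2) u, ?_⟩
  rw [Fb_sub, iot_chain k hv (m+2), hg, ← hd, hf2]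
  exact add_sub_cancel_right f _

lemma E2 (hΔ : IsComplex Δ) (hv : v ∉ R) (m : ℕ)
    (hL : HV k (sub Δ R (insert v S)) m) (hX : HV k (sub Δ (insert v R) S) m) :
    HV k (sub Δ R S) m := by
  intro f hf
  have h1 : Fb k (sub Δ (insert v R) S) m (iot k Δ v R S (m+1) f) = 0 := by
    rw [iot_chain k hv m, hf, iot_zero]
  obtain ⟨h, hh⟩ := hX _ h1
  have hσcyc : Fb k (sub Δ R (insert v S)) m (sig k Δ v R S hv (m+1) h) = 0 := by
    have h2 := sig_chain (S := S) k hv m h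
    rw [hh, sig_iot] at h2
    exact neg_eq_zero.mp h2.symm
  obtain ⟨u, hu⟩ := hL _ hσcyc
  set h2 := h + Fb k (sub Δ (insert v R) S) (m+2) (tau k Δ v R S (m+2) u) with hh2
  have hs : sig k Δ v R S hv (m+1) h2 = 0 := by
    rw [hh2, sig_add, sig_chain k hv (m+1), sig_tau, hu]
    simp
  have hd := decomp k (hv := hv) (m+1) h2
  rw [hs, tau_zero, add_zero] at hd
  refine ⟨alp k Δ v R S (m+2) h2, ?_⟩
  have h4 : iot k Δ v R S (m+1) (Fb k (sub Δ R S) (m+1) (alp k Δ v R S (m+2) h2))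
      = iot k Δ v R S (m+1) f := by
    rw [← iot_chain k hv (m+1), ← hd, hh2, Fb_add, hh,
      Fb_Fb k (sub_isComplex hΔ _ _) (m+1), add_zero]
  have h5 := congrArg (alp k Δ v R S (m+1)) h4
  rwa [alp_iot k hv, alp_iot k hv] at h5

lemma E3 (hΔ : IsComplex Δ) (hv : v ∉ R) (m : ℕ)
    (hX : HV k (sub Δ (insert v R) S) (m+1)) (hA : HV k (sub Δ R S) m) :
    HV k (sub Δ R (insert v S)) m := by
  intro g hg
  set d := Fb k (sub Δ (insert v R) S) (m+1) (tau k Δ v R S (m+1) g) with hd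
  have hsd : sig k Δ v R S hv m d = 0 := by
    rw [hd, sig_chain k hv m, sig_tau, hg, neg_zero]
  have hdd := decomp k (hv := hv) m d
  rw [hsd, tau_zero, add_zero] at hdd
  have hcyc : Fb k (sub Δ R S) m (alp k Δ v R S (m+1) d) = 0 := by
    refine iot_eq_zero k hv m ?_
    rw [← iot_chain k hv m, ← hdd, hd, Fb_Fb k (sub_isComplex hΔ _ _) m]
  obtain ⟨w, hw⟩ := hA _ hcyc
  have hecyc : Fb k (sub Δ (insert v R) S) (m+1)
      (tau k Δ v R S (m+1) g - iot k Δ v R S (m+2) w) = 0 := by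
    rw [Fb_sub, ← hd, iot_chain k hv (m+1), hw, ← hdd, sub_self]
  obtain ⟨h, hh⟩ := hX _ hecyc
  refine ⟨- sig k Δ v R S hv (m+2) h, ?_⟩
  have h5 := sig_chain (S := S) k hv (m+1) h
  rw [hh, sig_sub, sig_tau, sig_iot, sub_zero] at h5
  rw [Fb_neg]
  exact h5.symm

end Exactness

section Bridge

variable {Δ' : Set (Finset (Fin n))}

lemma boundary_coe (Δ' : Set (Finset (Fin n))) (p : ℤ) :
    ⇑(boundary k Δ' p) = boundaryFun k Δ' p := rfl

lemma chainsCongr_apply (Δ' : Set (Finset (Fin n))) {p q : ℤ} (h : p = q)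
    (f : Chains k Δ' p) (F : {F : Finset (Fin n) // F ∈ Δ' ∧ (F.card : ℤ) = q + 1}) :
    chainsCongr k Δ' h f F = f ⟨F.1, F.2.1, by rw [F.2.2, h]⟩ := by
  subst h
  rfl

lemma boundaryFun_eq_Fb (Δ' : Set (Finset (Fin n))) (p : ℤ) (m : ℕ) (hpm : p = (m : ℤ))
    (f : Chains k Δ' p) (ψf : FChains k Δ' (m+1))
    (hψ : ∀ (F : Finset (Fin n)) (e1 : F ∈ Δ') (e2 : (F.card : ℤ) = p + 1)
      (e3 : F.card = m + 1), f ⟨F, e1, e2⟩ = ψf ⟨F, e1, e3⟩)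
    (G : Finset (Fin n)) (h1 : G ∈ Δ') (hz : (G.card : ℤ) = p - 1 + 1) (hn : G.card = m) :
    boundaryFun k Δ' p f ⟨G, h1, hz⟩ = Fb k Δ' m ψf ⟨G, h1, hn⟩ := by
  subst hpm
  unfold boundaryFun Fb
  refine Finset.sum_congr rfl fun x _ => ?_
  split_ifs with h
  · rw [hψ (insert x G) h.2
      (by rw [Finset.card_insert_of_notMem h.1, hn]; push_cast; ring)
      (by rw [Finset.card_insert_of_notMem h.1, hn])]
  · rfl

lemma subsingleton_iff_HV (Δ' : Set (Finset (Fin n))) (m : ℕ) :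
    Subsingleton (ReducedHomology k Δ' (m : ℤ)) ↔ HV k Δ' m := by
  rw [Submodule.Quotient.subsingleton_iff, Submodule.eq_top_iff']
  constructor
  · intro hall g hg
    set f : Chains k Δ' (m : ℤ) := fun F => g ⟨F.1, F.2.1, by have h2 := F.2.2; omega⟩
      with hfdef
    have hfcyc : f ∈ cycles k Δ' (m : ℤ) := by
      rw [cycles, LinearMap.mem_ker, boundary_coe]
      funext G
      have h3 : G.1.card = m := by have h2 := G.2.2; omega
      have h4 := congrFun hg ⟨G.1, G.2.1, h3⟩
      calc boundaryFun k Δ' (m : ℤ) f ⟨G.1, G.2.1, G.2.2⟩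
          = Fb k Δ' m g ⟨G.1, G.2.1, h3⟩ :=
            boundaryFun_eq_Fb k Δ' (m : ℤ) m rfl f g (fun F e1 e2 e3 => rfl) G.1 G.2.1 G.2.2 h3
        _ = 0 := h4
    have hmem := hall ⟨f, hfcyc⟩
    rw [Submodule.mem_comap] at hmem
    rw [boundaries, LinearMap.mem_range] at hmem
    obtain ⟨y, hy⟩ := hmem
    refine ⟨fun F => y ⟨F.1, F.2.1, by have h2 := F.2.2; push_cast; omega⟩, ?_⟩
    funext F
    have hzF : (F.1.card : ℤ) = (m : ℤ) + 1 := by have h2 := F.2.2; push_cast; omega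
    have h4 := congrFun hy ⟨F.1, F.2.1, hzF⟩
    have h5 : ((chainsCongr k Δ' (show (m:ℤ) + 1 - 1 = (m:ℤ) by ring)).toLinearMap ∘ₗ
        boundary k Δ' ((m:ℤ) + 1)) y ⟨F.1, F.2.1, hzF⟩
        = boundaryFun k Δ' ((m:ℤ)+1) y ⟨F.1, F.2.1, by rw [hzF]; ring⟩ := by
      rw [LinearMap.comp_apply]
      exact chainsCongr_apply k Δ' _ _ _
    rw [h5] at h4
    have h6 := boundaryFun_eq_Fb k Δ' ((m:ℤ)+1) (m+1) (by push_cast; ring) y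
      (fun F => y ⟨F.1, F.2.1, by have h2 := F.2.2; push_cast; omega⟩)
      (fun F e1 e2 e3 => rfl) F.1 F.2.1 (by rw [hzF]; ring) F.2.2
    rw [h6] at h4
    exact h4
  · intro hv x
    rw [Submodule.mem_comap]
    obtain ⟨f, hf⟩ := x
    rw [cycles, LinearMap.mem_ker, boundary_coe] at hf
    have hcyc : Fb k Δ' m (fun F => f ⟨F.1, F.2.1, by rw [F.2.2]; push_cast; ring⟩) = 0 := by
      funext G
      have hzG : (G.1.card : ℤ) = (m : ℤ) - 1 + 1 := by have h2 := G.2.2; push_cast; omega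
      have h4 := congrFun hf ⟨G.1, G.2.1, hzG⟩
      calc Fb k Δ' m _ G
          = boundaryFun k Δ' (m : ℤ) f ⟨G.1, G.2.1, hzG⟩ :=
            (boundaryFun_eq_Fb k Δ' (m : ℤ) m rfl f _ (fun F e1 e2 e3 => rfl)
              G.1 G.2.1 hzG G.2.2).symm
        _ = 0 := h4
    obtain ⟨g', hg'⟩ := hv _ hcyc
    rw [boundaries, LinearMap.mem_range]
    refine ⟨fun F => g' ⟨F.1, F.2.1, by have h2 := F.2.2; omega⟩, ?_⟩
    funext F
    have hzF : (F.1.card : ℤ) = ((m:ℤ)+1) - 1 + 1 := by have h2 := F.2.2; push_cast; omega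
    have hnF : F.1.card = m + 1 := by have h2 := F.2.2; omega
    have h5 : ((chainsCongr k Δ' (show (m:ℤ) + 1 - 1 = (m:ℤ) by ring)).toLinearMap ∘ₗ
        boundary k Δ' ((m:ℤ) + 1)) (fun F => g' ⟨F.1, F.2.1, by have h2 := F.2.2; omega⟩) F
        = boundaryFun k Δ' ((m:ℤ)+1)
            (fun F => g' ⟨F.1, F.2.1, by have h2 := F.2.2; omega⟩) ⟨F.1, F.2.1, hzF⟩ := by
      rw [LinearMap.comp_apply]
      exact chainsCongr_apply k Δ' _ _ _
    rw [h5]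
    have h6 := boundaryFun_eq_Fb k Δ' ((m:ℤ)+1) (m+1) (by push_cast; ring)
      (fun F => g' ⟨F.1, F.2.1, by have h2 := F.2.2; omega⟩) g'
      (fun F e1 e2 e3 => rfl) F.1 F.2.1 hzF hnF
    rw [h6]
    have h7 := congrFun hg' ⟨F.1, F.2.1, hnF⟩
    exact h7
end Bridge

section SetIdent

lemma restrict_eq_sub (Δ : Set (Finset (Fin n))) (R : Finset (Fin n)) :
    restrict Δ R = sub Δ R ∅ := by
  ext F
  constructor
  · rintro ⟨h1, h2⟩
    exact mem_sub.mpr ⟨h2, by rwa [Finset.union_empty]⟩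
  · intro h
    exact ⟨by have := (mem_sub.mp h).2; rwa [Finset.union_empty] at this, (mem_sub.mp h).1⟩

lemma link_eq_sub (Δ : Set (Finset (Fin n))) (S : Finset (Fin n)) :
    link Δ S = sub Δ Sᶜ S := by
  ext F
  constructor
  · rintro ⟨h1, h2⟩
    exact mem_sub.mpr ⟨le_compl_iff_disjoint_right.mpr h1, h2⟩
  · intro h
    exact ⟨le_compl_iff_disjoint_right.mp (mem_sub.mp h).1, (mem_sub.mp h).2⟩

end SetIdent

section Assembly

variable {Δ : Set (Finset (Fin n))}

lemma claimRev (hΔ : IsComplex Δ) (c : ℕ)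
    (Hlink : ∀ S ∈ Δ, HV k (link Δ S) c) :
    ∀ t S, n - S.card ≤ t → ∀ m, c ≤ m → ∀ R : Finset (Fin n),
      Disjoint R S → HV k (sub Δ R S) m := by
  intro t
  induction t with
  | zero =>
    intro S hS m hm R hd
    refine HV_degenerate k _ _ (fun F hF => ?_)
    have h1 : F ⊆ Sᶜ := ((mem_sub.mp hF).1).trans (le_compl_iff_disjoint_right.mpr hd)
    have h2 : F.card ≤ Sᶜ.card := Finset.card_le_card h1
    rw [Finset.card_compl, Fintype.card_fin] at h2
    omega
  | succ t ih =>
    intro S hS m hm R hdis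
    have hsucc : ∀ S' : Finset (Fin n), S'.card = S.card + 1 → ∀ m', c ≤ m' →
        ∀ R' : Finset (Fin n), Disjoint R' S' → HV k (sub Δ R' S') m' := by
      intro S' hcard m' hm' R' hd'
      exact ih S' (by omega) m' hm' R' hd'
    have hbase : ∀ R' : Finset (Fin n), Disjoint R' S → Sᶜ ⊆ R' → HV k (sub Δ R' S) c := by
      intro R' hd' hsub
      have h2 : R' = Sᶜ := Finset.Subset.antisymm (le_compl_iff_disjoint_right.mpr hd') hsub
      rw [h2]
      by_cases hSmem : S ∈ Δ
      · have h3 := Hlink S hSmem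
        rwa [link_eq_sub] at h3
      · refine HV_degenerate k _ _ (fun F hF => ?_)
        exact absurd (hΔ _ (mem_sub.mp hF).2 S Finset.subset_union_right) hSmem
    have ha : ∀ r (R' : Finset (Fin n)), R'.card ≤ r → Disjoint R' S → ∀ m', c ≤ m' →
        HV k (sub Δ R' S) (m'+1) := by
      intro r
      induction r with
      | zero =>
        intro R' hR' hd' m' hm'
        refine HV_degenerate k _ _ (fun F hF => ?_)
        have h1 : F.card ≤ R'.card := Finset.card_le_card (mem_sub.mp hF).1
        omega
      | succ r ihr =>
        intro R' hR' hd' m' hm'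
        by_cases hsmall : R'.card ≤ m' + 1
        · refine HV_degenerate k _ _ (fun F hF => ?_)
          have h1 : F.card ≤ R'.card := Finset.card_le_card (mem_sub.mp hF).1
          omega
        · have hne : R'.Nonempty := by
            rw [← Finset.card_pos]; omega
          obtain ⟨v, hvR⟩ := hne
          have hvS : v ∉ S := fun h => (Finset.disjoint_left.mp hd') hvR h
          have hR'' : R' = insert v (R'.erase v) := (Finset.insert_erase hvR).symm
          rw [hR'']
          have hvnot : v ∉ R'.erase v := Finset.notMem_erase v R'
          refine E1 k hΔ hvnot m' ?_ ?_
          · refine ihr (R'.erase v) ?_ ?_ m' hm'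
            · rw [Finset.card_erase_of_mem hvR]; omega
            · exact Finset.disjoint_of_subset_left (Finset.erase_subset v R') hd'
          · refine hsucc (insert v S) (Finset.card_insert_of_notMem hvS) m' hm' _ ?_
            rw [Finset.disjoint_insert_right]
            exact ⟨Finset.notMem_erase v R',
              Finset.disjoint_of_subset_left (Finset.erase_subset v R') hd'⟩
    have hb : ∀ s (R' : Finset (Fin n)), Disjoint R' S → (Sᶜ \ R').card ≤ s →
        HV k (sub Δ R' S) c := by
      intro s
      induction s with
      | zero =>
        intro R' hd' hcard
        refine hbase R' hd' (Finset.sdiff_eq_empty_iff_subset.mp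
          (Finset.card_eq_zero.mp (le_antisymm hcard (Nat.zero_le _))))
      | succ s ihs =>
        intro R' hd' hcard
        by_cases hempty : (Sᶜ \ R') = ∅
        · exact hbase R' hd' (Finset.sdiff_eq_empty_iff_subset.mp hempty)
        · obtain ⟨v, hv⟩ := Finset.nonempty_iff_ne_empty.mpr hempty
          have hvC : v ∈ Sᶜ := (Finset.mem_sdiff.mp hv).1
          have hvR : v ∉ R' := (Finset.mem_sdiff.mp hv).2
          have hvS : v ∉ S := Finset.mem_compl.mp hvC
          refine E2 k hΔ hvR c ?_ ?_
          · exact hsucc (insert v S) (Finset.card_insert_of_notMem hvS) c le_rfl R'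
              (Finset.disjoint_insert_right.mpr ⟨hvR, hd'⟩)
          · refine ihs (insert v R') (Finset.disjoint_insert_left.mpr ⟨hvS, hd'⟩) ?_
            have heq : Sᶜ \ insert v R' = (Sᶜ \ R').erase v := by
              ext y
              simp only [Finset.mem_sdiff, Finset.mem_erase, Finset.mem_insert]
              tauto
            rw [heq, Finset.card_erase_of_mem hv]
            omega
    rcases Nat.eq_or_lt_of_le hm with h | h
    · rw [← h]
      exact hb (Sᶜ \ R).card R hdis le_rfl
    · obtain ⟨m', rfl⟩ : ∃ m', m = m' + 1 := ⟨m - 1, by omega⟩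
      exact ha R.card R le_rfl hdis m' (by omega)

lemma claimFwd (hΔ : IsComplex Δ) (c : ℕ)
    (Hres : ∀ m, c ≤ m → ∀ R : Finset (Fin n), HV k (restrict Δ R) m) :
    ∀ s S, S.card ≤ s → ∀ m, c ≤ m → ∀ R : Finset (Fin n),
      Disjoint R S → HV k (sub Δ R S) m := by
  intro s
  induction s with
  | zero =>
    intro S hS m hm R hd
    have h0 : S = ∅ := Finset.card_eq_zero.mp (le_antisymm hS (Nat.zero_le _))
    rw [h0, ← restrict_eq_sub]
    exact Hres m hm R
  | succ s ihs =>
    intro S hS m hm R hd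
    rcases Finset.eq_empty_or_nonempty S with rfl | ⟨v, hvS⟩
    · rw [← restrict_eq_sub]
      exact Hres m hm R
    · have hS' : S = insert v (S.erase v) := (Finset.insert_erase hvS).symm
      have hvR : v ∉ R := fun h => (Finset.disjoint_left.mp hd) h hvS
      rw [hS']
      refine E3 k hΔ hvR m ?_ ?_
      · refine ihs (S.erase v) ?_ (m+1) (by omega) (insert v R) ?_
        · rw [Finset.card_erase_of_mem hvS]; omega
        · rw [Finset.disjoint_insert_left]
          exact ⟨Finset.notMem_erase v S,
            Finset.disjoint_of_subset_right (Finset.erase_subset v S) hd⟩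
      · exact ihs (S.erase v) (by rw [Finset.card_erase_of_mem hvS]; omega) m hm R
          (Finset.disjoint_of_subset_right (Finset.erase_subset v S) hd)

end Assembly

/-- `Δ` is CLeray iff `H̃_c(lk_Δ S) = 0` for all faces `S`. -/
theorem stmt5 (k : Type) [Field k] {n : ℕ} (Δ : Set (Finset (Fin n)))
    (hΔ : IsComplex Δ) (c : ℕ) (hc : IsFrame Δ c) :
    (∀ p : ℤ, (c : ℤ) ≤ p → ∀ R : Finset (Fin n),
        Subsingleton (ReducedHomology k (restrict Δ R) p)) ↔
    (∀ S ∈ Δ, Subsingleton (ReducedHomology k (link Δ S) (c : ℤ))) := by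
  constructor
  · intro hL S hS
    rw [subsingleton_iff_HV]
    have Hres : ∀ m, c ≤ m → ∀ R : Finset (Fin n), HV k (restrict Δ R) m := fun m hm R =>
      (subsingleton_iff_HV k _ m).mp (hL (m : ℤ) (by exact_mod_cast hm) R)
    have h1 := claimFwd k hΔ c Hres S.card S le_rfl c le_rfl Sᶜ disjoint_compl_left
    rwa [link_eq_sub]
  · intro hR p hp R
    have h0 : (0:ℤ) ≤ p := le_trans (by positivity) hp
    have hm : ((p.toNat : ℕ) : ℤ) = p := Int.toNat_of_nonneg h0
    rw [← hm, subsingleton_iff_HV]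
    have Hlink : ∀ S ∈ Δ, HV k (link Δ S) c := fun S hS =>
      (subsingleton_iff_HV k _ c).mp (hR S hS)
    have h1 := claimRev k hΔ c Hlink n ∅ (by simp) p.toNat (by omega) R
      (Finset.disjoint_empty_right R)
    rwa [restrict_eq_sub]

end SCx
end
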